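/- arXiv:1808.01767 — 4 statements merged into one kernel-verified Lean document; each statement's English description precedes it below -/
import Mathlib

section
/- Let (G,X,H) be a feasible configuration with |V(G)| ≥ 2, let v be a non-separating vertex of G, and x ∈ X_v. Define (G',X',H') = (G,X,H)/(v,x) by: G' = G ÷ v (shrinking at v), X'_u = X_u \ N_H(x) for u ∈ V(G'), and H' the hypergraph on ⋃_u X'_u with edges {e ∈ E(H) : |i_H(e) \ {x}| ≥ 2 and i_H(e) \ {x} ⊆ V(H')}, with incidences i_{H'}(e) = i_H(e) \ {x}. Then (G',X',H') is a feasible configuration; if (G,X,H) is degree-feasible then so is (G',X',H'); and if (G,X,H) is uncolorable then so is (G',X',H'). -/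
open Finset

noncomputable section
open scoped Classical

structure HGraph (α : Type) where
  verts : Finset α
  edges : Finset ℕ
  inc : ℕ → Finset α
  inc_sub : ∀ e ∈ edges, inc e ⊆ verts
  inc_card : ∀ e ∈ edges, 2 ≤ (inc e).card

variable {α β : Type} [DecidableEq α] [DecidableEq β]

namespace HGraph

def degree (G : HGraph α) (v : α) : ℕ :=
  (G.edges.filter (fun e => v ∈ G.inc e)).card

def maxDegree (G : HGraph α) : ℕ := G.verts.sup G.degree

def mult (G : HGraph α) (u v : α) : ℕ :=
  (G.edges.filter (fun e => G.inc e = {u, v})).card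

def Adj (G : HGraph α) (u v : α) : Prop :=
  u ≠ v ∧ ∃ e ∈ G.edges, u ∈ G.inc e ∧ v ∈ G.inc e

def Connected (G : HGraph α) : Prop :=
  ∀ u ∈ G.verts, ∀ v ∈ G.verts, Relation.ReflTransGen G.Adj u v

def IndepSet (H : HGraph β) (S : Finset β) : Prop :=
  ∀ e ∈ H.edges, ¬ H.inc e ⊆ S

def eraseEdge (H : HGraph β) (e₀ : ℕ) : HGraph β where
  verts := H.verts
  edges := H.edges.erase e₀
  inc := H.inc
  inc_sub := fun e he => H.inc_sub e (Finset.mem_of_mem_erase he)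
  inc_card := fun e he => H.inc_card e (Finset.mem_of_mem_erase he)

def induce (G : HGraph α) (S : Finset α) : HGraph α where
  verts := S
  edges := G.edges.filter (fun e => G.inc e ⊆ S)
  inc := G.inc
  inc_sub := fun e he => (Finset.mem_filter.mp he).2
  inc_card := fun e he => G.inc_card e (Finset.mem_filter.mp he).1

def IsSub (G' G : HGraph α) : Prop :=
  G'.verts ⊆ G.verts ∧ G'.edges ⊆ G.edges ∧ ∀ e ∈ G'.edges, G'.inc e = G.inc e

def shrink (G : HGraph α) (v : α) : HGraph α where
  verts := G.verts.erase v
  edges := G.edges.filter (fun e => 2 ≤ ((G.inc e).erase v).card)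
  inc := fun e => (G.inc e).erase v
  inc_sub := by
    intro e he y hy
    rw [Finset.mem_erase] at hy ⊢
    exact ⟨hy.1, G.inc_sub e (Finset.mem_filter.mp he).1 hy.2⟩
  inc_card := fun e he => (Finset.mem_filter.mp he).2

def nbhd (H : HGraph β) (x : β) : Finset β :=
  H.verts.filter (fun y => ∃ e ∈ H.edges, H.inc e = {x, y})

def numComponents (G : HGraph α) : ℕ :=
  (G.verts.image (fun v => G.verts.filter (fun u => Relation.ReflTransGen G.Adj v u))).card

def IsBridge (G : HGraph α) (e : ℕ) : Prop :=
  numComponents (G.eraseEdge e) = numComponents G + ((G.inc e).card - 1)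

def IsSepVertex (G : HGraph α) (v : α) : Prop :=
  ∃ A B : Finset α, A ∪ B = G.verts ∧ A ∩ B = {v} ∧ 2 ≤ A.card ∧ 2 ≤ B.card ∧
    ∀ e ∈ G.edges, G.inc e ⊆ A ∨ G.inc e ⊆ B

def IsBlock (G : HGraph α) (S : Finset α) : Prop :=
  S ⊆ G.verts ∧ (G.induce S).Connected ∧ (∀ v, ¬ IsSepVertex (G.induce S) v) ∧
    ∀ S' : Finset α, S ⊆ S' → S' ⊆ G.verts → (G.induce S').Connected →
      (∀ v, ¬ IsSepVertex (G.induce S') v) → S' = S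

end HGraph

open HGraph

def IsCover (G : HGraph α) (X : α → Finset β) (H : HGraph β) : Prop :=
  (∀ u ∈ G.verts, ∀ v ∈ G.verts, u ≠ v → Disjoint (X u) (X v)) ∧
  H.verts = G.verts.biUnion X ∧
  (∀ v ∈ G.verts, H.IndepSet (X v)) ∧
  ∃ M : ℕ → Finset ℕ,
    (∀ e ∈ G.edges,
      M e ⊆ H.edges ∧
      (∀ e' ∈ M e, (∀ v ∈ G.inc e, (H.inc e' ∩ X v).card = 1) ∧
        H.inc e' ⊆ (G.inc e).biUnion X) ∧
      ∀ e₁ ∈ M e, ∀ e₂ ∈ M e, e₁ ≠ e₂ → Disjoint (H.inc e₁) (H.inc e₂)) ∧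
    H.edges = G.edges.biUnion M

def HasIT (H : HGraph β) (Vs : Finset α) (X : α → Finset β) : Prop :=
  ∃ T : Finset β, H.IndepSet T ∧ ∀ v ∈ Vs, (T ∩ X v).card = 1

def MinUncol (H : HGraph β) (Vs : Finset α) (X : α → Finset β) : Prop :=
  ¬ HasIT H Vs X ∧ ∀ e ∈ H.edges, HasIT (H.eraseEdge e) Vs X

def DPColorableAt (G : HGraph α) (k : ℕ) : Prop :=
  ∀ (X : α → Finset ℕ) (H : HGraph ℕ),
    IsCover G X H → (∀ v ∈ G.verts, k ≤ (X v).card) → HasIT H G.verts X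

def chiDP (G : HGraph α) : ℕ := sInf {k | DPColorableAt G k}

def DPDegreeColorable (G : HGraph α) : Prop :=
  ∀ (X : α → Finset ℕ) (H : HGraph ℕ),
    IsCover G X H → (∀ v ∈ G.verts, G.degree v ≤ (X v).card) → HasIT H G.verts X

def colNum (G : HGraph α) : ℕ :=
  sInf {k | ∀ G' : HGraph α, G'.IsSub G → G'.verts.Nonempty →
    ∃ v ∈ G'.verts, G'.degree v ≤ k}

def ProperColoring (G : HGraph α) (φ : α → ℕ) : Prop :=
  ∀ e ∈ G.edges, ∃ u ∈ G.inc e, ∃ v ∈ G.inc e, φ u ≠ φ v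

def LColorable (G : HGraph α) (L : α → Finset ℕ) : Prop :=
  ∃ φ : α → ℕ, ProperColoring G φ ∧ ∀ v ∈ G.verts, φ v ∈ L v

def chiList (G : HGraph α) : ℕ :=
  sInf {k | ∀ L : α → Finset ℕ, (∀ v ∈ G.verts, k ≤ (L v).card) → LColorable G L}

def IsTKn (B : HGraph α) (t n : ℕ) : Prop :=
  1 ≤ n ∧ B.verts.card = n ∧ (∀ e ∈ B.edges, (B.inc e).card = 2) ∧
  ∀ u ∈ B.verts, ∀ v ∈ B.verts, u ≠ v → B.mult u v = t

def IsTCn (B : HGraph α) (t n : ℕ) : Prop :=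
  3 ≤ n ∧ B.verts.card = n ∧ (∀ e ∈ B.edges, (B.inc e).card = 2) ∧
  ∃ f : ℕ → α,
    B.verts = (Finset.range n).image f ∧
    (∀ i < n, ∀ j < n, i ≠ j → f i ≠ f j) ∧
    ∀ i < n, ∀ j < n, i ≠ j →
      B.mult (f i) (f j) = if j = (i + 1) % n ∨ i = (j + 1) % n then t else 0

def IsDPHyperbrick (B : HGraph α) : Prop :=
  (∃ t n, 1 ≤ t ∧ 1 ≤ n ∧ IsTKn B t n) ∨
  (∃ t n, 1 ≤ t ∧ 3 ≤ n ∧ IsTCn B t n) ∨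
  (∃ e ∈ B.edges, B.verts = B.inc e ∧ B.edges = {e})

def AdjPair (G : HGraph α) (u v : α) : Prop :=
  u ≠ v ∧ ∃ e ∈ G.edges, G.inc e = {u, v}

def IsKConfig (G : HGraph α) (X : α → Finset β) (H : HGraph β) (t n : ℕ) : Prop :=
  1 ≤ t ∧ 1 ≤ n ∧ IsTKn G t n ∧ IsCover G X H ∧
  ∃ P : α → ℕ → Finset β,
    (∀ v ∈ G.verts, ∀ i ∈ Finset.range (n - 1), ∀ j ∈ Finset.range (n - 1),
      i ≠ j → Disjoint (P v i) (P v j)) ∧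
    (∀ v ∈ G.verts, X v = (Finset.range (n - 1)).biUnion (P v)) ∧
    (∀ v ∈ G.verts, ∀ i ∈ Finset.range (n - 1), (P v i).card = t) ∧
    (∀ i ∈ Finset.range (n - 1), ∀ u ∈ G.verts, ∀ v ∈ G.verts, u ≠ v →
      ∀ x ∈ P u i, ∀ y ∈ P v i, ∃ e ∈ H.edges, H.inc e = {x, y}) ∧
    (∀ e ∈ H.edges, ∃ i ∈ Finset.range (n - 1), ∃ u ∈ G.verts, ∃ v ∈ G.verts,
      u ≠ v ∧ ∃ x ∈ P u i, ∃ y ∈ P v i, H.inc e = {x, y})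

def IsOddCConfig (G : HGraph α) (X : α → Finset β) (H : HGraph β) (t n : ℕ) : Prop :=
  1 ≤ t ∧ 5 ≤ n ∧ Odd n ∧ IsTCn G t n ∧ IsCover G X H ∧
  ∃ P : α → ℕ → Finset β,
    (∀ v ∈ G.verts, Disjoint (P v 0) (P v 1)) ∧
    (∀ v ∈ G.verts, X v = P v 0 ∪ P v 1) ∧
    (∀ v ∈ G.verts, (P v 0).card = t ∧ (P v 1).card = t) ∧
    (∀ i ∈ ({0, 1} : Finset ℕ), ∀ u ∈ G.verts, ∀ v ∈ G.verts, AdjPair G u v →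
      ∀ x ∈ P u i, ∀ y ∈ P v i, ∃ e ∈ H.edges, H.inc e = {x, y}) ∧
    (∀ e ∈ H.edges, ∃ i ∈ ({0, 1} : Finset ℕ), ∃ u ∈ G.verts, ∃ v ∈ G.verts,
      AdjPair G u v ∧ ∃ x ∈ P u i, ∃ y ∈ P v i, H.inc e = {x, y})

def IsEvenCConfig (G : HGraph α) (X : α → Finset β) (H : HGraph β) (t n : ℕ) : Prop :=
  1 ≤ t ∧ 4 ≤ n ∧ Even n ∧ IsTCn G t n ∧ IsCover G X H ∧
  ∃ P : α → ℕ → Finset β, ∃ w w' : α, w ∈ G.verts ∧ w' ∈ G.verts ∧ AdjPair G w w' ∧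
    (∀ v ∈ G.verts, Disjoint (P v 0) (P v 1)) ∧
    (∀ v ∈ G.verts, X v = P v 0 ∪ P v 1) ∧
    (∀ v ∈ G.verts, (P v 0).card = t ∧ (P v 1).card = t) ∧
    (∀ i ∈ ({0, 1} : Finset ℕ), ∀ u ∈ G.verts, ∀ v ∈ G.verts, AdjPair G u v →
      ({u, v} : Finset α) ≠ {w, w'} →
      ∀ x ∈ P u i, ∀ y ∈ P v i, ∃ e ∈ H.edges, H.inc e = {x, y}) ∧
    (∀ x ∈ P w 0, ∀ y ∈ P w' 1, ∃ e ∈ H.edges, H.inc e = {x, y}) ∧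
    (∀ x ∈ P w 1, ∀ y ∈ P w' 0, ∃ e ∈ H.edges, H.inc e = {x, y}) ∧
    (∀ e ∈ H.edges, ∃ x y : β, H.inc e = {x, y} ∧
      ((∃ i ∈ ({0, 1} : Finset ℕ), ∃ u ∈ G.verts, ∃ v ∈ G.verts,
        AdjPair G u v ∧ ({u, v} : Finset α) ≠ {w, w'} ∧ x ∈ P u i ∧ y ∈ P v i) ∨
       (x ∈ P w 0 ∧ y ∈ P w' 1) ∨ (x ∈ P w 1 ∧ y ∈ P w' 0)))

def IsEConfig (G : HGraph α) (X : α → Finset β) (H : HGraph β) : Prop :=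
  (∃ e₀ ∈ G.edges, G.edges = {e₀} ∧ G.verts = G.inc e₀) ∧
  IsCover G X H ∧ (∀ v ∈ G.verts, (X v).card = 1) ∧
  ∃ e₁ ∈ H.edges, H.edges = {e₁} ∧ H.inc e₁ = G.verts.biUnion X

def IsMergeOf (G : HGraph α) (X : α → Finset β) (H : HGraph β)
    (G₁ : HGraph α) (X₁ : α → Finset β) (H₁ : HGraph β)
    (G₂ : HGraph α) (X₂ : α → Finset β) (H₂ : HGraph β)
    (v₁ v₂ vs : α) : Prop :=
  Disjoint G₁.verts G₂.verts ∧ Disjoint G₁.edges G₂.edges ∧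
  Disjoint H₁.verts H₂.verts ∧ Disjoint H₁.edges H₂.edges ∧
  v₁ ∈ G₁.verts ∧ v₂ ∈ G₂.verts ∧ vs ∉ G₁.verts ∪ G₂.verts ∧
  G.verts = insert vs (((G₁.verts ∪ G₂.verts).erase v₁).erase v₂) ∧
  G.edges = G₁.edges ∪ G₂.edges ∧
  (∀ e ∈ G₁.edges, G.inc e =
    if v₁ ∈ G₁.inc e then insert vs ((G₁.inc e).erase v₁) else G₁.inc e) ∧
  (∀ e ∈ G₂.edges, G.inc e =
    if v₂ ∈ G₂.inc e then insert vs ((G₂.inc e).erase v₂) else G₂.inc e) ∧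
  H.verts = H₁.verts ∪ H₂.verts ∧ H.edges = H₁.edges ∪ H₂.edges ∧
  (∀ e ∈ H₁.edges, H.inc e = H₁.inc e) ∧ (∀ e ∈ H₂.edges, H.inc e = H₂.inc e) ∧
  X vs = X₁ v₁ ∪ X₂ v₂ ∧
  (∀ u ∈ G₁.verts.erase v₁, X u = X₁ u) ∧ (∀ u ∈ G₂.verts.erase v₂, X u = X₂ u)

inductive Constructible : HGraph α → (α → Finset β) → HGraph β → Prop where
  | K : ∀ {G : HGraph α} {X : α → Finset β} {H : HGraph β} {t n : ℕ},
      IsKConfig G X H t n → Constructible G X H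
  | Codd : ∀ {G : HGraph α} {X : α → Finset β} {H : HGraph β} {t n : ℕ},
      IsOddCConfig G X H t n → Constructible G X H
  | Ceven : ∀ {G : HGraph α} {X : α → Finset β} {H : HGraph β} {t n : ℕ},
      IsEvenCConfig G X H t n → Constructible G X H
  | E : ∀ {G : HGraph α} {X : α → Finset β} {H : HGraph β},
      IsEConfig G X H → Constructible G X H
  | merge : ∀ {G G₁ G₂ : HGraph α} {X X₁ X₂ : α → Finset β} {H H₁ H₂ : HGraph β}
      {v₁ v₂ vs : α},
      Constructible G₁ X₁ H₁ → Constructible G₂ X₂ H₂ →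
      IsMergeOf G X H G₁ X₁ H₁ G₂ X₂ H₂ v₁ v₂ vs → Constructible G X H

def reducedVerts (G : HGraph α) (X : α → Finset β) (H : HGraph β)
    (v : α) (x : β) : Finset β :=
  (G.shrink v).verts.biUnion (fun u => X u \ H.nbhd x)

def reduceH (G : HGraph α) (X : α → Finset β) (H : HGraph β)
    (v : α) (x : β) : HGraph β where
  verts := reducedVerts G X H v x
  edges := H.edges.filter (fun e =>
    2 ≤ ((H.inc e).erase x).card ∧ (H.inc e).erase x ⊆ reducedVerts G X H v x)
  inc := fun e => (H.inc e).erase x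
  inc_sub := fun e he => (Finset.mem_filter.mp he).2.2
  inc_card := fun e he => (Finset.mem_filter.mp he).2.1

/-- the reduction (G,X,H)/(v,x) at a non-separating vertex v yields a
feasible configuration, preserves degree-feasibility and uncolorability. -/
theorem reduction_feasible (G : HGraph α) (X : α → Finset β) (H : HGraph β)
    (hG : G.Connected) (hC : IsCover G X H) (h2 : 2 ≤ G.verts.card)
    (v : α) (hv : v ∈ G.verts) (hns : ¬ IsSepVertex G v) (x : β) (hx : x ∈ X v) :
    (G.shrink v).Connected ∧
    IsCover (G.shrink v) (fun u => X u \ H.nbhd x) (reduceH G X H v x) ∧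
    ((∀ u ∈ G.verts, G.degree u ≤ (X u).card) →
      ∀ u ∈ (G.shrink v).verts, (G.shrink v).degree u ≤ (X u \ H.nbhd x).card) ∧
    (¬ HasIT H G.verts X →
      ¬ HasIT (reduceH G X H v x) (G.shrink v).verts (fun u => X u \ H.nbhd x)) := by
  classical
  obtain ⟨hdisj, hHverts, hindep, M, hM, hHedges⟩ := hC
  have hXeq : ∀ {u w : α} {z : β}, u ∈ G.verts → w ∈ G.verts → z ∈ X u → z ∈ X w → u = w := by
    intro u w z hu hw hzu hzw
    by_contra hne
    exact Finset.disjoint_left.mp (hdisj u hu w hw hne) hzu hzw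
  have hRmem : ∀ {z : β}, z ∈ reducedVerts G X H v x ↔
      ∃ u, u ∈ G.verts.erase v ∧ z ∈ X u ∧ z ∉ H.nbhd x := by
    intro z
    simp [reducedVerts, HGraph.shrink, Finset.mem_biUnion, Finset.mem_sdiff]
  have hRnb : ∀ {z : β}, z ∈ reducedVerts G X H v x → z ∉ H.nbhd x := by
    intro z hz
    obtain ⟨u, _, _, h⟩ := hRmem.mp hz
    exact h
  have hRnXv : ∀ {z : β}, z ∈ reducedVerts G X H v x → z ∉ X v := by
    intro z hz hzv
    obtain ⟨u, hu, hzu, _⟩ := hRmem.mp hz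
    exact (Finset.mem_erase.mp hu).1 (hXeq (Finset.mem_of_mem_erase hu) hv hzu hzv)
  have hMof : ∀ e' ∈ H.edges, ∃ e, e ∈ G.edges ∧ e' ∈ M e := by
    intro e' he'
    rw [hHedges] at he'
    exact Finset.mem_biUnion.mp he'
  have hone : ∀ {e e' : ℕ}, e ∈ G.edges → e' ∈ M e → ∀ {w : α}, w ∈ G.inc e →
      (H.inc e' ∩ X w).card = 1 := by
    intro e e' he he' w hw
    exact ((hM e he).2.1 e' he').1 w hw
  have hWin : ∀ {e e' : ℕ}, e ∈ G.edges → e' ∈ M e → ∀ {z : β} {w : α}, z ∈ H.inc e' →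
      w ∈ G.verts → z ∈ X w → w ∈ G.inc e := by
    intro e e' he he' z w hz hw hzw
    obtain ⟨w', hw', hzw'⟩ := Finset.mem_biUnion.mp (((hM e he).2.1 e' he').2 hz)
    rwa [hXeq hw (G.inc_sub e he hw') hzw hzw']
  have hAdj : ∀ {e : ℕ} {y z : α}, e ∈ G.edges → y ∈ G.inc e → z ∈ G.inc e → y ≠ z →
      y ≠ v → z ≠ v → (G.shrink v).Adj y z := by
    intro e y z he hy hz hyz hyv hzv
    have hy' : y ∈ (G.inc e).erase v := Finset.mem_erase.mpr ⟨hyv, hy⟩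
    have hz' : z ∈ (G.inc e).erase v := Finset.mem_erase.mpr ⟨hzv, hz⟩
    have hcard : 2 ≤ ((G.inc e).erase v).card := Finset.one_lt_card.mpr ⟨y, hy', z, hz', hyz⟩
    exact ⟨hyz, e, Finset.mem_filter.mpr ⟨he, hcard⟩, hy', hz'⟩
  -- Part 1 : connectivity
  have hconn : (G.shrink v).Connected := by
    intro u hu w hw
    by_contra hcon
    apply hns
    set C := (G.shrink v).verts.filter
      (fun z => Relation.ReflTransGen (G.shrink v).Adj u z) with hCdef
    have hCsub : C ⊆ G.verts.erase v := Finset.filter_subset _ _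
    have huC : u ∈ C := Finset.mem_filter.mpr ⟨hu, Relation.ReflTransGen.refl⟩
    have hwC : w ∉ C := fun h => hcon (Finset.mem_filter.mp h).2
    refine ⟨insert v C, insert v ((G.verts.erase v) \ C), ?_, ?_, ?_, ?_, ?_⟩
    · ext z
      simp only [Finset.mem_union, Finset.mem_insert, Finset.mem_sdiff]
      constructor
      · rintro ((rfl | h) | (rfl | h))
        · exact hv
        · exact Finset.mem_of_mem_erase (hCsub h)
        · exact hv
        · exact Finset.mem_of_mem_erase h.1
      · intro hz
        rcases eq_or_ne z v with rfl | hzv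
        · exact Or.inl (Or.inl rfl)
        · by_cases hzC : z ∈ C
          · exact Or.inl (Or.inr hzC)
          · exact Or.inr (Or.inr ⟨Finset.mem_erase.mpr ⟨hzv, hz⟩, hzC⟩)
    · ext z
      simp only [Finset.mem_inter, Finset.mem_insert, Finset.mem_singleton, Finset.mem_sdiff]
      constructor
      · rintro ⟨h1 | h1, h2 | h2⟩
        · exact h1
        · exact h1
        · exact h2
        · exact absurd h1 h2.2
      · rintro rfl
        exact ⟨Or.inl rfl, Or.inl rfl⟩
    · exact Finset.one_lt_card.mpr ⟨v, Finset.mem_insert_self v C, u,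
        Finset.mem_insert_of_mem huC, Ne.symm (Finset.mem_erase.mp hu).1⟩
    · exact Finset.one_lt_card.mpr ⟨v, Finset.mem_insert_self _ _, w,
        Finset.mem_insert_of_mem (Finset.mem_sdiff.mpr ⟨hw, hwC⟩),
        Ne.symm (Finset.mem_erase.mp hw).1⟩
    · intro e he
      by_cases hall : (G.inc e).erase v ⊆ C
      · left
        intro z hz
        rcases eq_or_ne z v with rfl | hzv
        · exact Finset.mem_insert_self _ _
        · exact Finset.mem_insert_of_mem (hall (Finset.mem_erase.mpr ⟨hzv, hz⟩))
      · right
        obtain ⟨z, hz, hzC⟩ := Finset.not_subset.mp hall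
        intro y hy
        rcases eq_or_ne y v with rfl | hyv
        · exact Finset.mem_insert_self _ _
        · refine Finset.mem_insert_of_mem (Finset.mem_sdiff.mpr
            ⟨Finset.mem_erase.mpr ⟨hyv, G.inc_sub e he hy⟩, ?_⟩)
          intro hyC
          apply hzC
          have hyz : y ≠ z := by
            rintro rfl
            exact hzC hyC
          have hadj := hAdj he hy (Finset.mem_of_mem_erase hz) hyz hyv
            (Finset.mem_erase.mp hz).1
          have hym := Finset.mem_filter.mp hyC
          exact Finset.mem_filter.mpr ⟨Finset.mem_erase.mpr ⟨(Finset.mem_erase.mp hz).1,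
            G.inc_sub e he (Finset.mem_of_mem_erase hz)⟩, hym.2.tail hadj⟩
  refine ⟨hconn, ⟨?_, rfl, ?_, fun e => (M e).filter
      (fun e' => e' ∈ (reduceH G X H v x).edges), ?_, ?_⟩, ?_, ?_⟩
  -- cover : disjointness
  · intro u hu w hw hne
    exact (hdisj u (Finset.mem_of_mem_erase hu) w (Finset.mem_of_mem_erase hw) hne).mono
      Finset.sdiff_subset Finset.sdiff_subset
  -- cover : independence
  · intro u hu e he hsub
    obtain ⟨heH, hc2, hsR⟩ := Finset.mem_filter.mp he
    obtain ⟨e₀, he₀, heM⟩ := hMof e heH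
    obtain ⟨y, hy, z, hz, hyz⟩ := Finset.one_lt_card.mp hc2
    have hyu : y ∈ X u := (Finset.mem_sdiff.mp (hsub hy)).1
    have hzu : z ∈ X u := (Finset.mem_sdiff.mp (hsub hz)).1
    have hu' := Finset.mem_of_mem_erase hu
    have hwin : u ∈ G.inc e₀ := hWin he₀ heM (Finset.mem_of_mem_erase hy) hu' hyu
    have h1 := hone he₀ heM hwin
    have hsub2 : ({y, z} : Finset β) ⊆ H.inc e ∩ X u := by
      intro t ht
      rcases Finset.mem_insert.mp ht with rfl | ht
      · exact Finset.mem_inter.mpr ⟨Finset.mem_of_mem_erase hy, hyu⟩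
      · rw [Finset.mem_singleton] at ht
        subst ht
        exact Finset.mem_inter.mpr ⟨Finset.mem_of_mem_erase hz, hzu⟩
    have hle := Finset.card_le_card hsub2
    rw [h1, Finset.card_pair hyz] at hle
    omega
  -- cover : matching conditions
  · intro e he
    have heG : e ∈ G.edges := (Finset.mem_filter.mp he).1
    refine ⟨fun e' he' => (Finset.mem_filter.mp he').2, ?_, ?_⟩
    · intro e' he'
      obtain ⟨heM, heH'⟩ := Finset.mem_filter.mp he'
      obtain ⟨heH, hc2, hsR⟩ := Finset.mem_filter.mp heH'
      constructor
      · intro w hw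
        obtain ⟨hwv, hwinc⟩ := Finset.mem_erase.mp hw
        have h1 := hone heG heM hwinc
        obtain ⟨y, hy⟩ := Finset.card_eq_one.mp h1
        have hymem : y ∈ H.inc e' ∩ X w := by
          rw [hy]
          exact Finset.mem_singleton_self y
        obtain ⟨hyinc, hyXw⟩ := Finset.mem_inter.mp hymem
        have hyx : y ≠ x := by
          rintro rfl
          exact hwv (hXeq (G.inc_sub e heG hwinc) hv hyXw hx)
        have hyer : y ∈ (H.inc e').erase x := Finset.mem_erase.mpr ⟨hyx, hyinc⟩
        have hynb : y ∉ H.nbhd x := hRnb (hsR hyer)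
        show ((H.inc e').erase x ∩ (X w \ H.nbhd x)).card = 1
        have heq : (H.inc e').erase x ∩ (X w \ H.nbhd x) = {y} := by
          ext z
          simp only [Finset.mem_inter, Finset.mem_erase, Finset.mem_sdiff, Finset.mem_singleton]
          constructor
          · rintro ⟨⟨hzx, hz⟩, hzw, _⟩
            have hzm : z ∈ H.inc e' ∩ X w := Finset.mem_inter.mpr ⟨hz, hzw⟩
            rw [hy] at hzm
            exact Finset.mem_singleton.mp hzm
          · rintro rfl
            exact ⟨⟨hyx, hyinc⟩, hyXw, hynb⟩
        rw [heq, Finset.card_singleton]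
      · intro z hz
        have hzR := hsR hz
        obtain ⟨hzx, hzinc⟩ := Finset.mem_erase.mp hz
        obtain ⟨w, hw, hzw⟩ := Finset.mem_biUnion.mp (((hM e heG).2.1 e' heM).2 hzinc)
        have hwv : w ≠ v := by
          rintro rfl
          exact hRnXv hzR hzw
        exact Finset.mem_biUnion.mpr ⟨w, Finset.mem_erase.mpr ⟨hwv, hw⟩,
          Finset.mem_sdiff.mpr ⟨hzw, hRnb hzR⟩⟩
    · intro e₁ h1 e₂ h2 hne
      exact ((hM e heG).2.2 e₁ (Finset.mem_filter.mp h1).1 e₂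
        (Finset.mem_filter.mp h2).1 hne).mono (Finset.erase_subset _ _) (Finset.erase_subset _ _)
  -- cover : edge decomposition
  · ext e'
    simp only [Finset.mem_biUnion]
    constructor
    · intro he'
      obtain ⟨heH, hc2, hsR⟩ := Finset.mem_filter.mp he'
      obtain ⟨e, heG, heM⟩ := hMof e' heH
      obtain ⟨y, hy, z, hz, hyz⟩ := Finset.one_lt_card.mp hc2
      have hyR := hsR hy
      have hzR := hsR hz
      obtain ⟨wy, hwy, hywy⟩ := Finset.mem_biUnion.mp
        (((hM e heG).2.1 e' heM).2 (Finset.mem_of_mem_erase hy))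
      obtain ⟨wz, hwz, hzwz⟩ := Finset.mem_biUnion.mp
        (((hM e heG).2.1 e' heM).2 (Finset.mem_of_mem_erase hz))
      have hwyv : wy ≠ v := by
        rintro rfl
        exact hRnXv hyR hywy
      have hwzv : wz ≠ v := by
        rintro rfl
        exact hRnXv hzR hzwz
      have hwyz : wy ≠ wz := by
        rintro rfl
        have h1 := hone heG heM hwy
        have hsub2 : ({y, z} : Finset β) ⊆ H.inc e' ∩ X wy := by
          intro t ht
          rcases Finset.mem_insert.mp ht with rfl | ht
          · exact Finset.mem_inter.mpr ⟨Finset.mem_of_mem_erase hy, hywy⟩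
          · rw [Finset.mem_singleton] at ht
            subst ht
            exact Finset.mem_inter.mpr ⟨Finset.mem_of_mem_erase hz, hzwz⟩
        have hle := Finset.card_le_card hsub2
        rw [h1, Finset.card_pair hyz] at hle
        omega
      have heG' : e ∈ (G.shrink v).edges := Finset.mem_filter.mpr ⟨heG,
        Finset.one_lt_card.mpr ⟨wy, Finset.mem_erase.mpr ⟨hwyv, hwy⟩, wz,
          Finset.mem_erase.mpr ⟨hwzv, hwz⟩, hwyz⟩⟩
      exact ⟨e, heG', Finset.mem_filter.mpr ⟨heM, he'⟩⟩
    · rintro ⟨e, heG', heM'⟩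
      exact (Finset.mem_filter.mp heM').2
  -- Part 3 : degree feasibility
  · intro hdeg u hu
    have huv : u ≠ v := (Finset.mem_erase.mp hu).1
    have huG : u ∈ G.verts := Finset.mem_of_mem_erase hu
    set D := G.edges.filter (fun e => u ∈ G.inc e) with hD
    set B := G.edges.filter (fun e => G.inc e = {u, v}) with hB
    have hBD : B ⊆ D := by
      intro e heB
      obtain ⟨he, hinc⟩ := Finset.mem_filter.mp heB
      refine Finset.mem_filter.mpr ⟨he, ?_⟩
      rw [hinc]
      exact Finset.mem_insert_self _ _
    have hdeg' : (G.shrink v).degree u ≤ (D \ B).card := by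
      apply Finset.card_le_card
      intro e heF
      obtain ⟨heG', hue⟩ := Finset.mem_filter.mp heF
      obtain ⟨heG, hc2⟩ := Finset.mem_filter.mp heG'
      refine Finset.mem_sdiff.mpr ⟨Finset.mem_filter.mpr ⟨heG, Finset.mem_of_mem_erase hue⟩, ?_⟩
      intro heB
      have hinc := (Finset.mem_filter.mp heB).2
      rw [hinc, show ({u, v} : Finset α) = insert v {u} from Finset.pair_comm u v,
        Finset.erase_insert (Finset.notMem_singleton.mpr (Ne.symm huv)),
        Finset.card_singleton] at hc2
      omega
    have hkey : ∀ y ∈ X u ∩ H.nbhd x, ∃ e', e' ∈ H.edges ∧ H.inc e' = {x, y} := by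
      intro y hy
      exact (Finset.mem_filter.mp (Finset.mem_inter.mp hy).2).2
    let F : β → ℕ := fun y => if h : ∃ e', e' ∈ H.edges ∧ H.inc e' = {x, y} then h.choose else 0
    have hF : ∀ y ∈ X u ∩ H.nbhd x, F y ∈ H.edges ∧ H.inc (F y) = {x, y} := by
      intro y hy
      have h := hkey y hy
      simp only [F, dif_pos h]
      exact h.choose_spec
    let E : ℕ → ℕ := fun e' => if h : ∃ e, e ∈ G.edges ∧ e' ∈ M e then h.choose else 0
    have hE : ∀ e' ∈ H.edges, E e' ∈ G.edges ∧ e' ∈ M (E e') := by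
      intro e' he'
      have h := hMof e' he'
      simp only [E, dif_pos h]
      exact h.choose_spec
    have hxy : ∀ y ∈ X u, y ≠ x := by
      intro y hy
      rintro rfl
      exact huv (hXeq huG hv hy hx)
    have hcardB : (X u ∩ H.nbhd x).card ≤ B.card := by
      apply Finset.card_le_card_of_injOn (fun y => E (F y))
      · intro y hy
        obtain ⟨hFe, hFinc⟩ := hF y hy
        obtain ⟨hEe, hEM⟩ := hE _ hFe
        refine Finset.mem_filter.mpr ⟨hEe, ?_⟩
        have hxinc : x ∈ H.inc (F y) := by
          rw [hFinc]
          exact Finset.mem_insert_self _ _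
        have hyinc : y ∈ H.inc (F y) := by
          rw [hFinc]
          exact Finset.mem_insert_of_mem (Finset.mem_singleton_self y)
        have hyu : y ∈ X u := (Finset.mem_inter.mp hy).1
        have hvin : v ∈ G.inc (E (F y)) := hWin hEe hEM hxinc hv hx
        have huin : u ∈ G.inc (E (F y)) := hWin hEe hEM hyinc huG hyu
        apply Finset.Subset.antisymm
        · intro w hw
          have h1 := hone hEe hEM hw
          have hne : (H.inc (F y) ∩ X w).Nonempty := by
            rw [← Finset.card_pos, h1]
            norm_num
          obtain ⟨z, hz⟩ := hne
          obtain ⟨hz1, hz2⟩ := Finset.mem_inter.mp hz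
          rw [hFinc] at hz1
          rcases Finset.mem_insert.mp hz1 with rfl | hz1
          · rw [hXeq (G.inc_sub _ hEe hw) hv hz2 hx]
            exact Finset.mem_insert_of_mem (Finset.mem_singleton_self v)
          · rw [Finset.mem_singleton] at hz1
            subst hz1
            rw [hXeq (G.inc_sub _ hEe hw) huG hz2 hyu]
            exact Finset.mem_insert_self _ _
        · intro w hw
          rcases Finset.mem_insert.mp hw with rfl | hw
          · exact huin
          · rw [Finset.mem_singleton] at hw
            subst hw
            exact hvin
      · intro y1 h1 y2 h2 heq
        by_contra hne
        have h1' : y1 ∈ X u ∩ H.nbhd x := h1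
        have h2' : y2 ∈ X u ∩ H.nbhd x := h2
        obtain ⟨hF1, hFi1⟩ := hF y1 h1'
        obtain ⟨hF2, hFi2⟩ := hF y2 h2'
        have hFne : F y1 ≠ F y2 := by
          intro hFeq
          rw [hFeq, hFi2] at hFi1
          have hy1m : y1 ∈ ({x, y2} : Finset β) := by
            rw [hFi1]
            exact Finset.mem_insert_of_mem (Finset.mem_singleton_self y1)
          rcases Finset.mem_insert.mp hy1m with h | h
          · exact hxy y1 (Finset.mem_inter.mp h1').1 h
          · rw [Finset.mem_singleton] at h
            exact hne h
        obtain ⟨hE1, hM1⟩ := hE _ hF1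
        have heq' : E (F y1) = E (F y2) := heq
        have hM2 : F y2 ∈ M (E (F y1)) := by
          rw [heq']
          exact (hE _ hF2).2
        have hdis := (hM _ hE1).2.2 (F y1) hM1 (F y2) hM2 hFne
        exact Finset.disjoint_left.mp hdis
          (by rw [hFi1]; exact Finset.mem_insert_self _ _)
          (by rw [hFi2]; exact Finset.mem_insert_self _ _)
    have hDdeg : G.degree u = D.card := rfl
    have hDle : G.degree u ≤ (X u).card := hdeg u huG
    have hsd : (D \ B).card + B.card = D.card := Finset.card_sdiff_add_card_eq_card hBD
    have hsd2 : (X u \ H.nbhd x).card + (X u ∩ H.nbhd x).card = (X u).card :=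
      Finset.card_sdiff_add_card_inter _ _
    omega
  -- Part 4 : uncolorability
  · rintro hnc ⟨T', hTind, hTcard⟩
    apply hnc
    set S := T' ∩ reducedVerts G X H v x with hS
    refine ⟨insert x S, ?_, ?_⟩
    · intro e he hsubT
      have hers : (H.inc e).erase x ⊆ S := by
        intro z hz
        rcases Finset.mem_insert.mp (hsubT (Finset.mem_of_mem_erase hz)) with h | h
        · exact absurd h (Finset.mem_erase.mp hz).1
        · exact h
      by_cases hc : 2 ≤ ((H.inc e).erase x).card
      · have heH' : e ∈ (reduceH G X H v x).edges :=
          Finset.mem_filter.mpr ⟨he, hc, hers.trans Finset.inter_subset_right⟩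
        exact hTind e heH' (hers.trans Finset.inter_subset_left)
      · have hxe : x ∈ H.inc e := by
          by_contra hxe
          rw [Finset.erase_eq_of_notMem hxe] at hc
          exact hc (H.inc_card e he)
        have hcard : ((H.inc e).erase x).card = 1 := by
          have hic := H.inc_card e he
          have hce := Finset.card_erase_of_mem hxe
          omega
        obtain ⟨y, hy⟩ := Finset.card_eq_one.mp hcard
        have hymem : y ∈ (H.inc e).erase x := by
          rw [hy]
          exact Finset.mem_singleton_self y
        have hyS : y ∈ S := hers hymem
        have hynb : y ∈ H.nbhd x := by
          refine Finset.mem_filter.mpr ⟨H.inc_sub e he (Finset.mem_of_mem_erase hymem), e, he, ?_⟩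
          rw [← hy, Finset.insert_erase hxe]
        exact hRnb (Finset.mem_inter.mp hyS).2 hynb
    · intro u hu
      rcases eq_or_ne u v with rfl | huv
      · have heq : insert x S ∩ X u = {x} := by
          ext z
          simp only [Finset.mem_inter, Finset.mem_insert, Finset.mem_singleton]
          constructor
          · rintro ⟨rfl | hzS, hzX⟩
            · rfl
            · exact absurd hzX (hRnXv (Finset.mem_inter.mp hzS).2)
          · rintro rfl
            exact ⟨Or.inl rfl, hx⟩
        rw [heq, Finset.card_singleton]
      · have huG' : u ∈ (G.shrink v).verts := Finset.mem_erase.mpr ⟨huv, hu⟩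
        have heq : insert x S ∩ X u = T' ∩ (X u \ H.nbhd x) := by
          ext z
          simp only [Finset.mem_inter, Finset.mem_insert, Finset.mem_sdiff]
          constructor
          · rintro ⟨rfl | hzS, hzX⟩
            · exact absurd (hXeq hu hv hzX hx) huv
            · obtain ⟨hzT, hzR⟩ := Finset.mem_inter.mp hzS
              exact ⟨hzT, hzX, hRnb hzR⟩
          · rintro ⟨hzT, hzX, hznb⟩
            exact ⟨Or.inr (Finset.mem_inter.mpr ⟨hzT,
              hRmem.mpr ⟨u, Finset.mem_erase.mpr ⟨huv, hu⟩, hzX, hznb⟩⟩), hzX⟩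
        rw [heq]
        exact hTcard u huG'
end
end

section
/- Let (G,X,H) be an uncolorable degree-feasible configuration. Then |X_v| = d_G(v) for every vertex v of G. -/
open Finset

noncomputable section
open scoped Classical

variable {α β : Type} [DecidableEq α] [DecidableEq β]

open HGraph

/-! ### Auxiliary machinery for the greedy coloring argument -/

def relN (G : HGraph α) : ℕ → α → α → Prop
  | 0, a, b => a = b
  | n+1, a, b => ∃ c, relN G n a c ∧ G.Adj c b

lemma reach_relN (G : HGraph α) {a b : α} (h : Relation.ReflTransGen G.Adj a b) :
    ∃ n, relN G n a b := by
  induction h with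
  | refl => exact ⟨0, rfl⟩
  | tail _ hbc ih => obtain ⟨n, hn⟩ := ih; exact ⟨n + 1, _, hn, hbc⟩

def gdist (G : HGraph α) (v₀ u : α) : ℕ := sInf {n | relN G n v₀ u}

lemma gdist_self (G : HGraph α) (v₀ : α) : gdist G v₀ v₀ = 0 :=
  Nat.le_zero.mp (Nat.sInf_le (show relN G 0 v₀ v₀ from rfl))

lemma exists_closer_neighbor (G : HGraph α) (hG : G.Connected) (v₀ : α)
    (hv₀ : v₀ ∈ G.verts) (u : α) (hu : u ∈ G.verts) (hne : u ≠ v₀) :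
    ∃ w ∈ G.verts, gdist G v₀ w < gdist G v₀ u ∧ w ≠ u ∧
      ∃ e ∈ G.edges, u ∈ G.inc e ∧ w ∈ G.inc e := by
  obtain ⟨n, hn⟩ := reach_relN G (hG v₀ hv₀ u hu)
  have hnonempty : {k | relN G k v₀ u}.Nonempty := ⟨n, hn⟩
  have hd : relN G (gdist G v₀ u) v₀ u := Nat.sInf_mem hnonempty
  cases hdu : gdist G v₀ u with
  | zero =>
    rw [hdu] at hd
    exact absurd hd.symm hne
  | succ k =>
    rw [hdu] at hd
    obtain ⟨c, hc, hadj⟩ := hd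
    obtain ⟨hcu, e, he, hce, hue⟩ := hadj
    refine ⟨c, G.inc_sub e he hce, ?_, hcu, e, he, hue, hce⟩
    exact Nat.lt_succ_of_le (Nat.sInf_le hc)

lemma choose_color (G : HGraph α) (X : α → Finset β) (H : HGraph β)
    (hC : IsCover G X H) {R : Finset α} {T : Finset β} {u : α}
    (hu : u ∈ G.verts)
    (hT2 : ∀ x ∈ T, ∃ v, v ∈ G.verts ∧ v ∉ R ∧ x ∈ X v)
    (hT1 : ∀ v ∈ G.verts, v ∉ R → (T ∩ X v).card = 1)
    (hTind : ∀ e' ∈ H.edges, ¬ H.inc e' ⊆ T)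
    (hEu : (G.edges.filter (fun e => u ∈ G.inc e ∧ ∀ w ∈ G.inc e, w = u ∨ w ∉ R)).card
      < (X u).card) :
    ∃ x ∈ X u, ∀ e' ∈ H.edges, ¬ H.inc e' ⊆ insert x T := by
  obtain ⟨hdisj, hverts, hindep, M, hM, hHE⟩ := hC
  by_contra hcon
  push_neg at hcon
  -- hcon : ∀ x ∈ X u, ∃ e' ∈ H.edges, H.inc e' ⊆ insert x T
  set Q : β → ℕ → Prop := fun x e => e ∈ G.edges ∧
      ∃ e', e' ∈ M e ∧ x ∈ H.inc e' ∧ H.inc e' ⊆ insert x T with hQdef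
  have hQ : ∀ x ∈ X u, ∃ e, Q x e := by
    intro x hx
    obtain ⟨e', he'H, hsub⟩ := hcon x hx
    have hb : e' ∈ G.edges.biUnion M := hHE ▸ he'H
    obtain ⟨e, heG, he'M⟩ := Finset.mem_biUnion.mp hb
    have hx_e' : x ∈ H.inc e' := by
      by_contra hxe
      refine hTind e' he'H (fun y hy => ?_)
      exact (Finset.mem_insert.mp (hsub hy)).resolve_left (fun h => hxe (h ▸ hy))
    exact ⟨e, heG, e', he'M, hx_e', hsub⟩
  have hfacts : ∀ x ∈ X u, ∀ e e', e ∈ G.edges → e' ∈ M e → x ∈ H.inc e' →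
      H.inc e' ⊆ insert x T →
      (u ∈ G.inc e ∧ ∀ w ∈ G.inc e, w = u ∨ w ∉ R) := by
    intro x hx e e' heG he'M hxe' hsub
    obtain ⟨hMsub, hMprop, hMdisj⟩ := hM e heG
    obtain ⟨hcard1, hsubU⟩ := hMprop e' he'M
    have hu_e : u ∈ G.inc e := by
      obtain ⟨v, hv, hxv⟩ := Finset.mem_biUnion.mp (hsubU hxe')
      have hveq : v = u := by
        by_contra hne
        exact (Finset.disjoint_left.mp (hdisj v (G.inc_sub e heG hv) u hu hne)) hxv hx
      exact hveq ▸ hv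
    refine ⟨hu_e, fun w hw => ?_⟩
    by_cases hwu : w = u
    · exact Or.inl hwu
    · right
      obtain ⟨y, hy⟩ := Finset.card_eq_one.mp (hcard1 w hw)
      have hy_mem : y ∈ H.inc e' ∩ X w := hy ▸ Finset.mem_singleton_self y
      have hyT : y ∈ T := by
        rcases Finset.mem_insert.mp (hsub (Finset.mem_inter.mp hy_mem).1) with h | h
        · exact absurd (h ▸ hx)
            (Finset.disjoint_left.mp (hdisj w (G.inc_sub e heG hw) u hu hwu)
              (Finset.mem_inter.mp hy_mem).2)
        · exact h
      obtain ⟨v', hv', hv'R, hyv'⟩ := hT2 y hyT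
      have hwv' : w = v' := by
        by_contra hne
        exact (Finset.disjoint_left.mp (hdisj w (G.inc_sub e heG hw) v' hv' hne))
          (Finset.mem_inter.mp hy_mem).2 hyv'
      exact fun hwR => hv'R (hwv' ▸ hwR)
  have hle : (X u).card ≤
      (G.edges.filter (fun e => u ∈ G.inc e ∧ ∀ w ∈ G.inc e, w = u ∨ w ∉ R)).card := by
    apply Finset.card_le_card_of_injOn (fun x => if h : ∃ e, Q x e then h.choose else 0)
    · intro x hx
      have h := hQ x hx
      simp only [dif_pos h]
      obtain ⟨heG, e', he'M, hxe', hsub⟩ := h.choose_spec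
      obtain ⟨h1, h2⟩ := hfacts x hx _ e' heG he'M hxe' hsub
      exact Finset.mem_filter.mpr ⟨heG, h1, h2⟩
    · intro x1 hx1 x2 hx2 hfeq
      have h1 := hQ x1 hx1
      have h2 := hQ x2 hx2
      simp only [dif_pos h1, dif_pos h2] at hfeq
      obtain ⟨heG1, e1', he1M, hx1e, hsub1⟩ := h1.choose_spec
      obtain ⟨heG2, e2', he2M, hx2e, hsub2⟩ := h2.choose_spec
      rw [hfeq] at heG1 he1M
      set e := h2.choose with he_def
      obtain ⟨hMsub, hMprop, hMdisj⟩ := hM e heG2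
      obtain ⟨hu_e, hproc⟩ := hfacts x1 hx1 e e1' heG2 he1M hx1e hsub1
      -- pick w ∈ inc e, w ≠ u
      obtain ⟨w, hw, hwu⟩ := Finset.exists_mem_ne
        (lt_of_lt_of_le one_lt_two (G.inc_card e heG2)) u
      have hwV : w ∈ G.verts := G.inc_sub e heG2 hw
      have hwR : w ∉ R := (hproc w hw).resolve_left hwu
      obtain ⟨t, ht⟩ := Finset.card_eq_one.mp (hT1 w hwV hwR)
      -- the element of inc e1' ∩ X w equals t, likewise for e2'
      have key : ∀ x e', x ∈ X u → e' ∈ M e → x ∈ H.inc e' → H.inc e' ⊆ insert x T →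
          t ∈ H.inc e' := by
        intro x e' hx he'M hxe' hsub
        obtain ⟨hcard1, hsubU⟩ := hMprop e' he'M
        obtain ⟨y, hy⟩ := Finset.card_eq_one.mp (hcard1 w hw)
        have hy_mem : y ∈ H.inc e' ∩ X w := hy ▸ Finset.mem_singleton_self y
        have hyT : y ∈ T := by
          rcases Finset.mem_insert.mp (hsub (Finset.mem_inter.mp hy_mem).1) with h | h
          · exact absurd (h ▸ hx)
              (Finset.disjoint_left.mp (hdisj w hwV u hu hwu)
                (Finset.mem_inter.mp hy_mem).2)
          · exact h
        have hyTXw : y ∈ T ∩ X w := Finset.mem_inter.mpr ⟨hyT, (Finset.mem_inter.mp hy_mem).2⟩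
        have hyt : y = t := by
          have := ht ▸ hyTXw
          exact Finset.mem_singleton.mp this
        exact hyt ▸ (Finset.mem_inter.mp hy_mem).1
      have ht1 : t ∈ H.inc e1' := key x1 e1' hx1 he1M hx1e hsub1
      have ht2 : t ∈ H.inc e2' := key x2 e2' hx2 he2M hx2e hsub2
      have he12 : e1' = e2' := by
        by_contra hne
        exact (Finset.disjoint_left.mp (hMdisj e1' he1M e2' he2M hne)) ht1 ht2
      obtain ⟨hcard1, _⟩ := hMprop e1' he1M
      have hcu : (H.inc e1' ∩ X u).card ≤ 1 := le_of_eq (hcard1 u hu_e)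
      exact Finset.card_le_one.mp hcu x1
        (Finset.mem_inter.mpr ⟨hx1e, hx1⟩) x2
        (Finset.mem_inter.mpr ⟨he12 ▸ hx2e, hx2⟩)
  exact absurd hle (not_le.mpr hEu)

lemma extend_IT (G : HGraph α) (X : α → Finset β) (H : HGraph β)
    (hG : G.Connected) (hC : IsCover G X H)
    (hdf : ∀ v ∈ G.verts, G.degree v ≤ (X v).card)
    (v₀ : α) (hv₀ : v₀ ∈ G.verts) (hslack : G.degree v₀ < (X v₀).card) :
    ∀ (m : ℕ) (R : Finset α) (T : Finset β), R.card = m → R ⊆ G.verts → v₀ ∈ R →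
      (∀ w ∈ G.verts, ∀ u' ∈ R, gdist G v₀ w < gdist G v₀ u' → w ∈ R) →
      (∀ v ∈ G.verts, v ∉ R → (T ∩ X v).card = 1) →
      (∀ x ∈ T, ∃ v, v ∈ G.verts ∧ v ∉ R ∧ x ∈ X v) →
      (∀ e' ∈ H.edges, ¬ H.inc e' ⊆ T) →
      HasIT H G.verts X := by
  have hdisj := hC.1
  intro m
  induction m with
  | zero =>
    intro R T hcard _ hv₀R _ _ _ _
    exact absurd hv₀R (by rw [Finset.card_eq_zero.mp hcard]; exact Finset.notMem_empty v₀)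
  | succ n ih =>
    intro R T hcard hRsub hv₀R hdc hT1 hT2 hTind
    -- generic facts
    have hTXmem : ∀ u' ∈ R, ∀ y ∈ T, y ∉ X u' := by
      intro u' hu'R y hy hyXu
      obtain ⟨v, hv, hvR, hyv⟩ := hT2 y hy
      have : u' = v := by
        by_contra hne
        exact (Finset.disjoint_left.mp (hdisj u' (hRsub hu'R) v hv hne)) hyXu hyv
      exact hvR (this ▸ hu'R)
    by_cases hR : R = {v₀}
    · -- last step : color v₀ and finish
      subst hR
      have hEu : (G.edges.filter
          (fun e => v₀ ∈ G.inc e ∧ ∀ w ∈ G.inc e, w = v₀ ∨ w ∉ ({v₀} : Finset α))).card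
          < (X v₀).card := by
        refine lt_of_le_of_lt (Finset.card_le_card ?_) hslack
        intro e he
        rw [Finset.mem_filter] at he ⊢
        exact ⟨he.1, he.2.1⟩
      obtain ⟨x, hxX, hxind⟩ := choose_color G X H hC hv₀
        (R := ({v₀} : Finset α)) hT2 hT1 hTind hEu
      refine ⟨insert x T, hxind, ?_⟩
      intro v hv
      by_cases hvv₀ : v = v₀
      · subst hvv₀
        have hTempty : T ∩ X v = ∅ := by
          refine Finset.eq_empty_of_forall_notMem (fun y hy => ?_)
          exact hTXmem v (Finset.mem_singleton_self v) y
            (Finset.mem_inter.mp hy).1 (Finset.mem_inter.mp hy).2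
        rw [Finset.insert_inter_of_mem hxX, hTempty]
        simp
      · have hvR : v ∉ ({v₀} : Finset α) := by simp [hvv₀]
        have hxnot : x ∉ X v := by
          intro hxv
          exact (Finset.disjoint_left.mp (hdisj v₀ hv₀ v hv (Ne.symm hvv₀))) hxX hxv
        rw [Finset.insert_inter_of_notMem hxnot]
        exact hT1 v hv hvR
    · -- pick u ∈ R, u ≠ v₀, of maximal distance
      have hS : (R.erase v₀).Nonempty := by
        rw [Finset.nonempty_iff_ne_empty]
        intro h
        rcases (Finset.erase_eq_empty_iff R v₀).mp h with h' | h'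
        · exact absurd hv₀R (h' ▸ Finset.notMem_empty v₀)
        · exact hR h'
      obtain ⟨u, huS, hmax⟩ := Finset.exists_max_image (R.erase v₀) (gdist G v₀) hS
      obtain ⟨huv₀, huR⟩ := Finset.mem_erase.mp huS
      have huV : u ∈ G.verts := hRsub huR
      obtain ⟨w, hwV, hwdist, hwu, e₀, he₀, hue₀, hwe₀⟩ :=
        exists_closer_neighbor G hG v₀ hv₀ u huV huv₀
      have hwR : w ∈ R := hdc w hwV u huR hwdist
      -- bound on blocking edges
      have he₀notEu : e₀ ∉ G.edges.filter
          (fun e => u ∈ G.inc e ∧ ∀ w' ∈ G.inc e, w' = u ∨ w' ∉ R) := by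
        intro h
        rcases (Finset.mem_filter.mp h).2.2 w hwe₀ with h' | h'
        · exact hwu h'
        · exact h' hwR
      have hEu : (G.edges.filter
          (fun e => u ∈ G.inc e ∧ ∀ w' ∈ G.inc e, w' = u ∨ w' ∉ R)).card < (X u).card := by
        have hsub2 : insert e₀ (G.edges.filter
            (fun e => u ∈ G.inc e ∧ ∀ w' ∈ G.inc e, w' = u ∨ w' ∉ R)) ⊆
            G.edges.filter (fun e => u ∈ G.inc e) := by
          intro e he
          rcases Finset.mem_insert.mp he with h | h
          · exact Finset.mem_filter.mpr ⟨h ▸ he₀, h ▸ hue₀⟩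
          · exact Finset.mem_filter.mpr ⟨(Finset.mem_filter.mp h).1, (Finset.mem_filter.mp h).2.1⟩
        have := Finset.card_le_card hsub2
        rw [Finset.card_insert_of_notMem he₀notEu] at this
        have hdeg : (G.edges.filter (fun e => u ∈ G.inc e)).card = G.degree u := rfl
        have := hdf u huV
        omega
      obtain ⟨x, hxX, hxind⟩ := choose_color G X H hC huV (R := R) hT2 hT1 hTind hEu
      -- apply induction hypothesis
      refine ih (R.erase u) (insert x T) ?_ ?_ ?_ ?_ ?_ ?_ hxind
      · rw [Finset.card_erase_of_mem huR, hcard]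
        omega
      · exact Finset.Subset.trans (Finset.erase_subset u R) hRsub
      · exact Finset.mem_erase.mpr ⟨Ne.symm huv₀, hv₀R⟩
      · intro w' hw' u' hu' hlt
        obtain ⟨hu'u, hu'R⟩ := Finset.mem_erase.mp hu'
        have hw'R : w' ∈ R := hdc w' hw' u' hu'R hlt
        have hltu : gdist G v₀ w' < gdist G v₀ u := by
          by_cases hu'v₀ : u' = v₀
          · subst hu'v₀
            rw [gdist_self] at hlt
            exact absurd hlt (Nat.not_lt_zero _)
          · exact lt_of_lt_of_le hlt (hmax u' (Finset.mem_erase.mpr ⟨hu'v₀, hu'R⟩))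
        refine Finset.mem_erase.mpr ⟨fun h => ?_, hw'R⟩
        exact lt_irrefl _ (h ▸ hltu)
      · intro v hv hvR'
        by_cases hvu : v = u
        · subst hvu
          have hTempty : T ∩ X v = ∅ := by
            refine Finset.eq_empty_of_forall_notMem (fun y hy => ?_)
            exact hTXmem v huR y (Finset.mem_inter.mp hy).1 (Finset.mem_inter.mp hy).2
          rw [Finset.insert_inter_of_mem hxX, hTempty]
          simp
        · have hvR : v ∉ R := fun h => hvR' (Finset.mem_erase.mpr ⟨hvu, h⟩)
          have hxnot : x ∉ X v := by
            intro hxv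
            exact (Finset.disjoint_left.mp (hdisj u huV v hv (fun h => hvu h.symm))) hxX hxv
          rw [Finset.insert_inter_of_notMem hxnot]
          exact hT1 v hv hvR
      · intro y hy
        rcases Finset.mem_insert.mp hy with h | h
        · exact ⟨u, huV, Finset.notMem_erase u R, h ▸ hxX⟩
        · obtain ⟨v, hv, hvR, hyv⟩ := hT2 y h
          exact ⟨v, hv, fun h' => hvR (Finset.mem_of_mem_erase h'), hyv⟩

/-- in an uncolorable degree-feasible configuration, |X_v| = d_G(v). -/
theorem uncolorable_card_eq_degree (G : HGraph α) (X : α → Finset β) (H : HGraph β)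
    (hG : G.Connected) (hC : IsCover G X H)
    (hdf : ∀ v ∈ G.verts, G.degree v ≤ (X v).card)
    (hunc : ¬ HasIT H G.verts X) :
    ∀ v ∈ G.verts, (X v).card = G.degree v := by
  intro v hv
  by_contra hne
  have hslack : G.degree v < (X v).card := lt_of_le_of_ne (hdf v hv) (fun h => hne h.symm)
  refine hunc (extend_IT G X H hG hC hdf v hv hslack G.verts.card G.verts ∅ rfl
    (Finset.Subset.refl _) hv (fun w hw _ _ _ => hw) ?_ ?_ ?_)
  · intro v' hv' hv'2; exact absurd hv' hv'2
  · intro x hx; exact absurd hx (Finset.notMem_empty x)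
  · intro e' he' hsub
    have h2 := H.inc_card e' he'
    have : H.inc e' = ∅ := Finset.subset_empty.mp hsub
    rw [this] at h2
    simp at h2
end
end

section
/- Let (G,X,H) be an uncolorable degree-feasible configuration. Then for each non-separating vertex z of G, each vertex v ≠ z, and each color x ∈ X_z, it holds |N_H(x) ∩ X_v| = μ_G(v,z). -/
open Finset

noncomputable section
open scoped Classical

variable {α β : Type} [DecidableEq α] [DecidableEq β]

open HGraph

/- ===================== Auxiliary development ===================== -/

section AuxIT

open HGraph Relation

/-- Layers of BFS reachability. -/
def reachN (G : HGraph α) (v : α) : ℕ → Finset α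
  | 0 => {v}
  | k+1 => reachN G v k ∪ G.verts.filter (fun w => ∃ u ∈ reachN G v k, G.Adj u w)

/-- BFS distance. -/
def distN (G : HGraph α) (v u : α) : ℕ := sInf {k | u ∈ reachN G v k}

lemma reach_exists {G : HGraph α} {v u : α} (h : Relation.ReflTransGen G.Adj v u) :
    ∃ k, u ∈ reachN G v k := by
  induction h with
  | refl => exact ⟨0, Finset.mem_singleton_self v⟩
  | tail hab hadj ih =>
    obtain ⟨k, hk⟩ := ih
    refine ⟨k+1, Finset.mem_union_right _ (Finset.mem_filter.mpr ⟨?_, _, hk, hadj⟩)⟩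
    obtain ⟨-, e, he, -, hm⟩ := hadj
    exact G.inc_sub e he hm

lemma distN_mem {G : HGraph α} {v u : α} (h : Relation.ReflTransGen G.Adj v u) :
    u ∈ reachN G v (distN G v u) := Nat.sInf_mem (reach_exists h)

lemma distN_le {G : HGraph α} {v u : α} {k : ℕ} (h : u ∈ reachN G v k) :
    distN G v u ≤ k := Nat.sInf_le h

lemma eq_of_distN_zero {G : HGraph α} {v u : α} (h : Relation.ReflTransGen G.Adj v u)
    (h0 : distN G v u = 0) : u = v := by
  have hm := distN_mem h
  rw [h0] at hm
  simpa [reachN] using hm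

lemma exists_closer {G : HGraph α} {v u : α} (h : Relation.ReflTransGen G.Adj v u)
    (hne : u ≠ v) : ∃ w, G.Adj w u ∧ distN G v w < distN G v u ∧ w ∈ G.verts := by
  have hmem := distN_mem h
  rcases hk : distN G v u with _ | m
  · exact absurd (eq_of_distN_zero h hk) hne
  · rw [hk] at hmem
    rcases Finset.mem_union.mp hmem with h1 | h2
    · have := distN_le h1
      omega
    · obtain ⟨hu, w, hw, hadj⟩ := Finset.mem_filter.mp h2
      refine ⟨w, hadj, ?_, ?_⟩
      · have := distN_le hw
        omega
      · obtain ⟨-, e, he, hwe, -⟩ := hadj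
        exact G.inc_sub e he hwe

lemma part_eq {G : HGraph α} {X : α → Finset β} {H : HGraph β} (hC : IsCover G X H)
    {u w : α} (hu : u ∈ G.verts) (hw : w ∈ G.verts) {y : β} (hyu : y ∈ X u) (hyw : y ∈ X w) :
    u = w := by
  by_contra hne
  exact (Finset.disjoint_left.mp (hC.1 u hu w hw hne)) hyu hyw

/-- Greedy coloring: a degree-feasible cover with a vertex of strict slack from which
everything is reachable has an independent transversal. -/
lemma greedy (G : HGraph α) (X : α → Finset β) (H : HGraph β)
    (hC : IsCover G X H) (hdf : ∀ u ∈ G.verts, G.degree u ≤ (X u).card)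
    (v : α) (hv : v ∈ G.verts) (hslack : G.degree v < (X v).card)
    (hreach : ∀ u ∈ G.verts, Relation.ReflTransGen G.Adj v u) :
    HasIT H G.verts X := by
  obtain ⟨hdisj, hverts, hindep, M, hM, hMun⟩ := hC
  have hC' : IsCover G X H := ⟨hdisj, hverts, hindep, M, hM, hMun⟩
  suffices h : ∀ U : Finset α, U ⊆ G.verts →
      ∀ T : Finset β, H.IndepSet T →
      (∀ c ∈ G.verts, c ∉ U → (T ∩ X c).card = 1) →
      (T ⊆ (G.verts \ U).biUnion X) →
      (∀ c ∈ G.verts, c ∉ U → ∀ u ∈ U, distN G v u ≤ distN G v c) →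
      ∃ T' : Finset β, H.IndepSet T' ∧ ∀ c ∈ G.verts, (T' ∩ X c).card = 1 by
    obtain ⟨T', h1, h2⟩ := h G.verts (subset_refl _) ∅
      (fun e he hsub => by
        have := H.inc_card e he
        rw [Finset.subset_empty.mp hsub] at this
        simp at this)
      (fun c hc hcn => absurd hc hcn)
      (Finset.empty_subset _)
      (fun c hc hcn => absurd hc hcn)
    exact ⟨T', h1, h2⟩
  intro U
  induction U using Finset.strongInduction with
  | _ U ih =>
    intro hU T hTind hTcard hTsub hdd
    rcases U.eq_empty_or_nonempty with rfl | hUne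
    · exact ⟨T, hTind, fun c hc => hTcard c hc (Finset.notMem_empty c)⟩
    obtain ⟨w, hwU, hwmax⟩ := Finset.exists_max_image U (distN G v) hUne
    have hwV : w ∈ G.verts := hU hwU
    set Fb := (X w).filter (fun x => ∃ e' ∈ H.edges, H.inc e' ⊆ T ∪ {x}) with hFbdef
    set F := G.edges.filter (fun e => w ∈ G.inc e ∧ ∀ u ∈ G.inc e, u ≠ w → u ∉ U) with hFdef
    have key : ∀ x ∈ Fb, ∃ e, (e ∈ F ∧ ∃ e' ∈ M e, x ∈ H.inc e' ∧ H.inc e' ⊆ T ∪ {x}) := by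
      intro x hxF
      obtain ⟨hxX, e', he', hsub⟩ := Finset.mem_filter.mp hxF
      have hxe' : x ∈ H.inc e' := by
        by_contra hxn
        refine hTind e' he' (fun y hy => ?_)
        rcases Finset.mem_union.mp (hsub hy) with h | h
        · exact h
        · exact absurd (Finset.mem_singleton.mp h ▸ hy) hxn
      obtain ⟨e, heG, he'M⟩ := Finset.mem_biUnion.mp (hMun ▸ he')
      obtain ⟨hMe1, hMe2, hMe3⟩ := hM e heG
      obtain ⟨hcard1, hsubB⟩ := hMe2 e' he'M
      obtain ⟨u₀, hu₀, hxu₀⟩ := Finset.mem_biUnion.mp (hsubB hxe')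
      have hu₀w : u₀ = w := part_eq hC' (G.inc_sub e heG hu₀) hwV hxu₀ hxX
      subst hu₀w
      refine ⟨e, Finset.mem_filter.mpr ⟨heG, hu₀, ?_⟩, e', he'M, hxe', hsub⟩
      intro u huinc hune huU
      obtain ⟨t, ht⟩ := Finset.card_eq_one.mp (hcard1 u huinc)
      have htm : t ∈ H.inc e' ∩ X u := by rw [ht]; exact Finset.mem_singleton_self t
      have htT : t ∈ T := by
        rcases Finset.mem_union.mp (hsub (Finset.mem_inter.mp htm).1) with h | h
        · exact h
        · exfalso
          rw [Finset.mem_singleton.mp h] at htm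
          exact hune (part_eq hC' (G.inc_sub e heG huinc) hwV (Finset.mem_inter.mp htm).2 hxX)
      obtain ⟨c, hc, htc⟩ := Finset.mem_biUnion.mp (hTsub htT)
      obtain ⟨hcV, hcU⟩ := Finset.mem_sdiff.mp hc
      exact hcU ((part_eq hC' (G.inc_sub e heG huinc) hcV (Finset.mem_inter.mp htm).2 htc) ▸ huU)
    have hcardle : Fb.card ≤ F.card := by
      classical
      refine Finset.card_le_card_of_injOn
        (fun x => if h : ∃ e, (e ∈ F ∧ ∃ e' ∈ M e, x ∈ H.inc e' ∧ H.inc e' ⊆ T ∪ {x})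
          then h.choose else 0) (fun x hx => ?_) ?_
      · simp only [dif_pos (key x hx)]
        exact (key x hx).choose_spec.1
      · intro x₁ hx₁ x₂ hx₂ heq
        have h1 := key x₁ hx₁
        have h2 := key x₂ hx₂
        simp only [dif_pos h1, dif_pos h2] at heq
        obtain ⟨he1F, e₁', he₁'M, hx₁e, hsub₁⟩ := h1.choose_spec
        obtain ⟨he2F, e₂', he₂'M, hx₂e, hsub₂⟩ := h2.choose_spec
        set e := h1.choose with hedef
        rw [← heq] at he₂'M
        obtain ⟨heG, hwinc, hrest⟩ := Finset.mem_filter.mp he1F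
        obtain ⟨hMe1, hMe2, hMe3⟩ := hM e heG
        obtain ⟨u, hu, hune⟩ := Finset.exists_mem_ne
          (lt_of_lt_of_le one_lt_two (G.inc_card e heG)) w
        have huV : u ∈ G.verts := G.inc_sub e heG hu
        have huU : u ∉ U := hrest u hu hune
        have hTu := hTcard u huV huU
        obtain ⟨t, ht⟩ := Finset.card_eq_one.mp hTu
        -- the X u point of each e'ᵢ lies in T ∩ X u = {t}
        have hpt : ∀ e' : ℕ, e' ∈ M e → ∀ x : β, x ∈ X w → x ∈ H.inc e' →
            H.inc e' ⊆ T ∪ {x} → t ∈ H.inc e' := by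
          intro e' he'M x hxX hxe hsubx
          obtain ⟨hcard1, hsubB⟩ := hMe2 e' he'M
          obtain ⟨s, hs⟩ := Finset.card_eq_one.mp (hcard1 u hu)
          have hsm : s ∈ H.inc e' ∩ X u := by rw [hs]; exact Finset.mem_singleton_self s
          have hsT : s ∈ T := by
            rcases Finset.mem_union.mp (hsubx (Finset.mem_inter.mp hsm).1) with h | h
            · exact h
            · exfalso
              rw [Finset.mem_singleton.mp h] at hsm
              exact hune.symm (part_eq hC' hwV huV hxX (Finset.mem_inter.mp hsm).2) |>.elim
          have : s ∈ T ∩ X u := Finset.mem_inter.mpr ⟨hsT, (Finset.mem_inter.mp hsm).2⟩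
          rw [ht] at this
          rw [← Finset.mem_singleton.mp this]
          exact (Finset.mem_inter.mp hsm).1
        have hx₁X : x₁ ∈ X w := (Finset.mem_filter.mp hx₁).1
        have hx₂X : x₂ ∈ X w := (Finset.mem_filter.mp hx₂).1
        have ht₁ := hpt e₁' he₁'M x₁ hx₁X hx₁e hsub₁
        have ht₂ := hpt e₂' he₂'M x₂ hx₂X hx₂e hsub₂
        have he'eq : e₁' = e₂' := by
          by_contra hne
          exact Finset.disjoint_left.mp (hMe3 e₁' he₁'M e₂' he₂'M hne) ht₁ ht₂
        obtain ⟨hcard1, hsubB⟩ := hMe2 e₁' he₁'M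
        have h1c := hcard1 w hwinc
        have hx₁m : x₁ ∈ H.inc e₁' ∩ X w := Finset.mem_inter.mpr ⟨hx₁e, hx₁X⟩
        have hx₂m : x₂ ∈ H.inc e₁' ∩ X w := Finset.mem_inter.mpr ⟨he'eq ▸ hx₂e, hx₂X⟩
        obtain ⟨s, hs⟩ := Finset.card_eq_one.mp h1c
        rw [hs] at hx₁m hx₂m
        rw [Finset.mem_singleton.mp hx₁m, Finset.mem_singleton.mp hx₂m]
    have hFb_lt : Fb.card < (X w).card := by
      rcases eq_or_ne w v with rfl | hwv
      · have hFdeg : F.card ≤ G.degree w := by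
          apply Finset.card_le_card
          intro e he
          obtain ⟨h1, h2, _⟩ := Finset.mem_filter.mp he
          exact Finset.mem_filter.mpr ⟨h1, h2⟩
        omega
      · obtain ⟨w', hadj, hltd, hw'V⟩ := exists_closer (hreach w hwV) hwv
        have hw'U : w' ∈ U := by
          by_contra hc
          exact absurd (hdd w' hw'V hc w hwU) (not_le.mpr hltd)
        obtain ⟨hne, e₀, he₀, hw'e₀, hwe₀⟩ := hadj
        have he₀deg : e₀ ∈ G.edges.filter (fun e => w ∈ G.inc e) :=
          Finset.mem_filter.mpr ⟨he₀, hwe₀⟩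
        have he₀F : e₀ ∉ F := fun hc =>
          (Finset.mem_filter.mp hc).2.2 w' hw'e₀ hne hw'U
        have hFsub : F ⊆ (G.edges.filter (fun e => w ∈ G.inc e)).erase e₀ := by
          intro e he
          refine Finset.mem_erase.mpr ⟨fun h => he₀F (h ▸ he), ?_⟩
          obtain ⟨h1, h2, _⟩ := Finset.mem_filter.mp he
          exact Finset.mem_filter.mpr ⟨h1, h2⟩
        have h1 := Finset.card_le_card hFsub
        rw [Finset.card_erase_of_mem he₀deg] at h1
        have h2 : 1 ≤ (G.edges.filter (fun e => w ∈ G.inc e)).card :=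
          Finset.card_pos.mpr ⟨e₀, he₀deg⟩
        have h3 := hdf w hwV
        unfold HGraph.degree at h3
        omega
    have hFbsub : Fb ⊆ X w := Finset.filter_subset _ _
    have hxex : ∃ x ∈ X w, x ∉ Fb := by
      have hpos : 0 < (X w \ Fb).card := by
        rw [Finset.card_sdiff_of_subset hFbsub]
        omega
      obtain ⟨x, hx⟩ := Finset.card_pos.mp hpos
      exact ⟨x, (Finset.mem_sdiff.mp hx).1, (Finset.mem_sdiff.mp hx).2⟩
    obtain ⟨x, hxX, hxFb⟩ := hxex
    have hxnF : ¬ ∃ e' ∈ H.edges, H.inc e' ⊆ T ∪ {x} := fun hc =>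
      hxFb (Finset.mem_filter.mpr ⟨hxX, hc⟩)
    refine ih (U.erase w) (Finset.erase_ssubset hwU)
      ((Finset.erase_subset _ _).trans hU) (T ∪ {x})
      (fun e he hsub => hxnF ⟨e, he, hsub⟩) ?_ ?_ ?_
    · intro c hcV hc
      by_cases hcU : c ∈ U
      · have hcw : c = w := by
          by_contra hcw
          exact hc (Finset.mem_erase.mpr ⟨hcw, hcU⟩)
        subst hcw
        have hTw : T ∩ X c = ∅ := by
          rw [Finset.eq_empty_iff_forall_notMem]
          intro t ht
          obtain ⟨htT, htX⟩ := Finset.mem_inter.mp ht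
          obtain ⟨c', hc', htc'⟩ := Finset.mem_biUnion.mp (hTsub htT)
          obtain ⟨hc'V, hc'U⟩ := Finset.mem_sdiff.mp hc'
          exact hc'U ((part_eq hC' hc'V hcV htc' htX) ▸ hcU)
        have : (T ∪ {x}) ∩ X c = {x} := by
          ext y
          simp only [Finset.mem_inter, Finset.mem_union, Finset.mem_singleton]
          constructor
          · rintro ⟨(hyT | rfl), hyX⟩
            · exact absurd (Finset.mem_inter.mpr ⟨hyT, hyX⟩) (by rw [hTw]; simp)
            · rfl
          · rintro rfl
            exact ⟨Or.inr rfl, hxX⟩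
        rw [this, Finset.card_singleton]
      · have hcw : c ≠ w := fun h => hcU (h ▸ hwU)
        have hxnc : x ∉ X c := fun h => hcw (part_eq hC' hcV hwV h hxX)
        have : (T ∪ {x}) ∩ X c = T ∩ X c := by
          ext y
          simp only [Finset.mem_inter, Finset.mem_union, Finset.mem_singleton]
          constructor
          · rintro ⟨(hyT | rfl), hyX⟩
            · exact ⟨hyT, hyX⟩
            · exact absurd hyX hxnc
          · rintro ⟨hyT, hyX⟩
            exact ⟨Or.inl hyT, hyX⟩
        rw [this]
        exact hTcard c hcV hcU
    · apply Finset.union_subset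
      · refine hTsub.trans (Finset.biUnion_subset_biUnion_of_subset_left _ ?_)
        exact Finset.sdiff_subset_sdiff (subset_refl _) (Finset.erase_subset _ _)
      · rw [Finset.singleton_subset_iff]
        exact Finset.mem_biUnion.mpr ⟨w,
          Finset.mem_sdiff.mpr ⟨hwV, Finset.notMem_erase w U⟩, hxX⟩
    · intro c hcV hc u hu
      by_cases hcU : c ∈ U
      · have hcw : c = w := by
          by_contra hcw
          exact hc (Finset.mem_erase.mpr ⟨hcw, hcU⟩)
        subst hcw
        exact hwmax u (Finset.mem_of_mem_erase hu)
      · exact hdd c hcV hcU u (Finset.mem_of_mem_erase hu)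

/-- Upper bound: |N_H(x) ∩ X_v| ≤ μ_G(v,z). -/
lemma nbhd_card_le (G : HGraph α) (X : α → Finset β) (H : HGraph β)
    (hC : IsCover G X H) {v z : α} (hv : v ∈ G.verts) (hz : z ∈ G.verts) (hvz : v ≠ z)
    {x : β} (hx : x ∈ X z) :
    (H.nbhd x ∩ X v).card ≤ G.mult v z := by
  obtain ⟨hdisj, hverts, hindep, M, hM, hMun⟩ := hC
  have hC' : IsCover G X H := ⟨hdisj, hverts, hindep, M, hM, hMun⟩
  have key : ∀ y ∈ H.nbhd x ∩ X v,
      ∃ e, ((e ∈ G.edges ∧ G.inc e = {v, z}) ∧ ∃ e' ∈ M e, H.inc e' = {x, y}) := by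
    intro y hy
    obtain ⟨hynb, hyX⟩ := Finset.mem_inter.mp hy
    obtain ⟨hyH, e', he', hinc⟩ := Finset.mem_filter.mp hynb
    obtain ⟨e, heG, he'M⟩ := Finset.mem_biUnion.mp (hMun ▸ he')
    obtain ⟨hMe1, hMe2, hMe3⟩ := hM e heG
    obtain ⟨hcard1, hsubB⟩ := hMe2 e' he'M
    have hxe : x ∈ H.inc e' := by rw [hinc]; exact Finset.mem_insert_self x {y}
    have hye : y ∈ H.inc e' := by rw [hinc]; exact Finset.mem_insert_of_mem (Finset.mem_singleton_self y)
    have hzin : z ∈ G.inc e := by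
      obtain ⟨u, hu, hxu⟩ := Finset.mem_biUnion.mp (hsubB hxe)
      rwa [part_eq hC' (G.inc_sub e heG hu) hz hxu hx] at hu
    have hvin : v ∈ G.inc e := by
      obtain ⟨u, hu, hyu⟩ := Finset.mem_biUnion.mp (hsubB hye)
      rwa [part_eq hC' (G.inc_sub e heG hu) hv hyu hyX] at hu
    have hincE : G.inc e = {v, z} := by
      apply Finset.Subset.antisymm
      · intro u hu
        obtain ⟨t, ht⟩ := Finset.card_eq_one.mp (hcard1 u hu)
        have htm : t ∈ H.inc e' ∩ X u := by rw [ht]; exact Finset.mem_singleton_self t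
        obtain ⟨hte, htX⟩ := Finset.mem_inter.mp htm
        rw [hinc] at hte
        rcases Finset.mem_insert.mp hte with rfl | hte'
        · rw [part_eq hC' (G.inc_sub e heG hu) hz htX hx]
          exact Finset.mem_insert_of_mem (Finset.mem_singleton_self z)
        · rw [Finset.mem_singleton.mp hte'] at htX
          rw [part_eq hC' (G.inc_sub e heG hu) hv htX hyX]
          exact Finset.mem_insert_self v {z}
      · intro u hu
        rcases Finset.mem_insert.mp hu with rfl | hu'
        · exact hvin
        · rw [Finset.mem_singleton.mp hu']; exact hzin
    exact ⟨e, ⟨heG, hincE⟩, e', he'M, hinc⟩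
  unfold HGraph.mult
  refine Finset.card_le_card_of_injOn
    (fun y => if h : ∃ e, ((e ∈ G.edges ∧ G.inc e = {v, z}) ∧ ∃ e' ∈ M e, H.inc e' = {x, y})
      then h.choose else 0) (fun y hy => ?_) ?_
  · simp only [dif_pos (key y hy)]
    obtain ⟨⟨h1, h2⟩, -⟩ := (key y hy).choose_spec
    exact Finset.mem_filter.mpr ⟨h1, h2⟩
  · intro y₁ hy₁ y₂ hy₂ heq
    have hy₁f : y₁ ∈ H.nbhd x ∩ X v := Finset.mem_coe.mp hy₁
    have hy₂f : y₂ ∈ H.nbhd x ∩ X v := Finset.mem_coe.mp hy₂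
    have h1 := key y₁ hy₁f
    have h2 := key y₂ hy₂f
    simp only [dif_pos h1, dif_pos h2] at heq
    obtain ⟨⟨heG, hincE⟩, e₁', he₁'M, hinc₁⟩ := h1.choose_spec
    obtain ⟨⟨-, -⟩, e₂', he₂'M, hinc₂⟩ := h2.choose_spec
    rw [← heq] at he₂'M
    obtain ⟨hMe1, hMe2, hMe3⟩ := hM h1.choose heG
    have hx₁ : x ∈ H.inc e₁' := by rw [hinc₁]; exact Finset.mem_insert_self x {y₁}
    have hx₂ : x ∈ H.inc e₂' := by rw [hinc₂]; exact Finset.mem_insert_self x {y₂}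
    have heq' : e₁' = e₂' := by
      by_contra hne
      exact Finset.disjoint_left.mp (hMe3 e₁' he₁'M e₂' he₂'M hne) hx₁ hx₂
    rw [heq', hinc₂] at hinc₁
    have hy₁m : y₁ ∈ ({x, y₂} : Finset β) := by
      rw [hinc₁]
      exact Finset.mem_insert_of_mem (Finset.mem_singleton_self y₁)
    have hy₁x : y₁ ≠ x := fun h =>
      hvz (part_eq hC' hv hz (h ▸ (Finset.mem_inter.mp hy₁f).2) hx)
    rcases Finset.mem_insert.mp hy₁m with h | h
    · exact absurd h hy₁x
    · exact Finset.mem_singleton.mp h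

/-- Degrees under shrinking. -/
lemma degree_shrink (G : HGraph α) {z u : α} (huz : u ≠ z) :
    G.degree u = (G.shrink z).degree u + G.mult u z := by
  have h1 : (G.shrink z).degree u =
      (G.edges.filter (fun e => u ∈ G.inc e ∧ G.inc e ≠ {u, z})).card := by
    unfold HGraph.degree HGraph.shrink
    simp only [Finset.filter_filter]
    congr 1
    apply Finset.filter_congr
    intro e he
    constructor
    · rintro ⟨h2le, hmem⟩
      refine ⟨Finset.mem_of_mem_erase hmem, fun heq => ?_⟩
      rw [heq] at h2le
      have hzm : z ∈ ({u, z} : Finset α) :=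
        Finset.mem_insert_of_mem (Finset.mem_singleton_self z)
      have hcard : ({u, z} : Finset α).card = 2 := by
        rw [Finset.card_insert_of_notMem (by simp [huz]), Finset.card_singleton]
      rw [Finset.card_erase_of_mem hzm, hcard] at h2le
      omega
    · rintro ⟨humem, hne⟩
      refine ⟨?_, Finset.mem_erase.mpr ⟨huz, humem⟩⟩
      by_cases hzm : z ∈ G.inc e
      · have hc := G.inc_card e he
        have hce := Finset.card_erase_of_mem hzm
        by_contra hlt
        have h1 : ((G.inc e).erase z).card = 1 := by omega
        obtain ⟨a, ha⟩ := Finset.card_eq_one.mp h1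
        have hua : u ∈ ({a} : Finset α) := ha ▸ Finset.mem_erase.mpr ⟨huz, humem⟩
        rw [show a = u from (Finset.mem_singleton.mp hua).symm] at ha
        apply hne
        rw [← Finset.insert_erase hzm, ha]
        ext b; simp [or_comm]
      · rw [Finset.erase_eq_of_notMem hzm]
        exact G.inc_card e he
  have h2 : (G.edges.filter (fun e => u ∈ G.inc e)).filter (fun e => G.inc e = {u, z})
      = G.edges.filter (fun e => G.inc e = {u, z}) := by
    rw [Finset.filter_filter]
    apply Finset.filter_congr
    intro e he
    constructor
    · exact fun h => h.2
    · intro h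
      refine ⟨?_, h⟩
      rw [h]; exact Finset.mem_insert_self u {z}
  have h3 : (G.edges.filter (fun e => u ∈ G.inc e)).filter (fun e => ¬ G.inc e = {u, z})
      = G.edges.filter (fun e => u ∈ G.inc e ∧ G.inc e ≠ {u, z}) := by
    rw [Finset.filter_filter]
  have h4 := Finset.card_filter_add_card_filter_not
    (s := G.edges.filter (fun e => u ∈ G.inc e)) (p := fun e => G.inc e = {u, z})
  rw [h2, h3] at h4
  rw [h1]
  unfold HGraph.degree HGraph.mult
  omega

/-- The reduced configuration is a cover of the shrunk graph. -/
lemma reduced_isCover (G : HGraph α) (X : α → Finset β) (H : HGraph β)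
    (hC : IsCover G X H) {z : α} (hz : z ∈ G.verts) {x : β} (hx : x ∈ X z) :
    IsCover (G.shrink z) (fun u => X u \ H.nbhd x) (reduceH G X H z x) := by
  obtain ⟨hdisj, hverts, hindep, M, hM, hMun⟩ := hC
  have hC' : IsCover G X H := ⟨hdisj, hverts, hindep, M, hM, hMun⟩
  have hsv : (G.shrink z).verts = G.verts.erase z := rfl
  refine ⟨?_, rfl, ?_, fun e => (M e).filter (fun e' => e' ∈ (reduceH G X H z x).edges), ?_, ?_⟩
  · intro u hu w hw hne
    exact (hdisj u (Finset.mem_of_mem_erase hu) w (Finset.mem_of_mem_erase hw) hne).mono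
      (Finset.sdiff_subset) (Finset.sdiff_subset)
  · intro u hu e he hsub
    obtain ⟨heH, h2, hsubRV⟩ := Finset.mem_filter.mp he
    obtain ⟨y₁, hy₁, y₂, hy₂, hyne⟩ := Finset.one_lt_card.mp h2
    have hy₁e : y₁ ∈ H.inc e := Finset.mem_of_mem_erase hy₁
    have hy₂e : y₂ ∈ H.inc e := Finset.mem_of_mem_erase hy₂
    have hy₁X : y₁ ∈ X u := (Finset.mem_sdiff.mp (hsub hy₁)).1
    have hy₂X : y₂ ∈ X u := (Finset.mem_sdiff.mp (hsub hy₂)).1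
    obtain ⟨e₀, he₀G, heM⟩ := Finset.mem_biUnion.mp (hMun ▸ heH)
    obtain ⟨hMe1, hMe2, hMe3⟩ := hM e₀ he₀G
    obtain ⟨hcard1, hsubB⟩ := hMe2 e heM
    have huV : u ∈ G.verts := Finset.mem_of_mem_erase hu
    obtain ⟨u', hu', hy₁u'⟩ := Finset.mem_biUnion.mp (hsubB hy₁e)
    have huinc : u ∈ G.inc e₀ := by
      rwa [part_eq hC' (G.inc_sub e₀ he₀G hu') huV hy₁u' hy₁X] at hu'
    have hlt : 1 < (H.inc e ∩ X u).card := Finset.one_lt_card.mpr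
      ⟨y₁, Finset.mem_inter.mpr ⟨hy₁e, hy₁X⟩, y₂, Finset.mem_inter.mpr ⟨hy₂e, hy₂X⟩, hyne⟩
    have := hcard1 u huinc
    omega
  · intro e he
    have heG : e ∈ G.edges := (Finset.mem_filter.mp he).1
    obtain ⟨hMe1, hMe2, hMe3⟩ := hM e heG
    refine ⟨fun e' he' => (Finset.mem_filter.mp he').2, ?_, ?_⟩
    · intro e' he'
      obtain ⟨he'M, he'H'⟩ := Finset.mem_filter.mp he'
      obtain ⟨he'H, h2x, hsubRV⟩ := Finset.mem_filter.mp he'H'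
      obtain ⟨hcard1, hsubB⟩ := hMe2 e' he'M
      constructor
      · intro u hu
        obtain ⟨huz, huinc⟩ := Finset.mem_erase.mp hu
        have huV : u ∈ G.verts := G.inc_sub e heG huinc
        obtain ⟨t, ht⟩ := Finset.card_eq_one.mp (hcard1 u huinc)
        have hclaim : (reduceH G X H z x).inc e' ∩ (X u \ H.nbhd x) = {t} := by
          apply Finset.Subset.antisymm
          · intro s hs
            obtain ⟨hs1, hs2⟩ := Finset.mem_inter.mp hs
            rw [← ht]
            exact Finset.mem_inter.mpr
              ⟨Finset.mem_of_mem_erase hs1, (Finset.mem_sdiff.mp hs2).1⟩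
          · intro s hs
            rw [Finset.mem_singleton.mp hs]
            have htm : t ∈ H.inc e' ∩ X u := by rw [ht]; exact Finset.mem_singleton_self t
            obtain ⟨hte, htX⟩ := Finset.mem_inter.mp htm
            have htx : t ≠ x := fun h => huz (part_eq hC' huV hz htX (h ▸ hx))
            have hter : t ∈ (H.inc e').erase x := Finset.mem_erase.mpr ⟨htx, hte⟩
            obtain ⟨c, hc, htc⟩ := Finset.mem_biUnion.mp (hsubRV hter)
            have hcu : c = u := part_eq hC' (Finset.mem_of_mem_erase hc) huV
              (Finset.mem_sdiff.mp htc).1 htX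
            exact Finset.mem_inter.mpr ⟨hter, Finset.mem_sdiff.mpr
              ⟨htX, (Finset.mem_sdiff.mp htc).2⟩⟩
        show ((reduceH G X H z x).inc e' ∩ (X u \ H.nbhd x)).card = 1
        rw [hclaim, Finset.card_singleton]
      · intro y hy
        have hye : y ∈ H.inc e' := Finset.mem_of_mem_erase hy
        obtain ⟨c, hc, hyc⟩ := Finset.mem_biUnion.mp (hsubRV hy)
        obtain ⟨u, hu, hyu⟩ := Finset.mem_biUnion.mp (hsubB hye)
        have hcV : c ∈ G.verts := Finset.mem_of_mem_erase hc
        have hcu : c = u := part_eq hC' hcV (G.inc_sub e heG hu) (Finset.mem_sdiff.mp hyc).1 hyu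
        subst hcu
        refine Finset.mem_biUnion.mpr ⟨c, ?_, hyc⟩
        exact Finset.mem_erase.mpr ⟨(Finset.mem_erase.mp hc).1, hu⟩
    · intro e₁ h1 e₂ h2 hne
      exact (hMe3 e₁ (Finset.mem_filter.mp h1).1 e₂ (Finset.mem_filter.mp h2).1 hne).mono
        (Finset.erase_subset _ _) (Finset.erase_subset _ _)
  · apply Finset.Subset.antisymm
    · intro e' he'
      obtain ⟨he'H, h2x, hsubRV⟩ := Finset.mem_filter.mp he'
      obtain ⟨e, heG, he'M⟩ := Finset.mem_biUnion.mp (hMun ▸ he'H)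
      obtain ⟨hMe1, hMe2, hMe3⟩ := hM e heG
      obtain ⟨hcard1, hsubB⟩ := hMe2 e' he'M
      have heS : e ∈ (G.shrink z).edges := by
        refine Finset.mem_filter.mpr ⟨heG, ?_⟩
        by_contra hlt
        have hc2 := G.inc_card e heG
        have hzin : z ∈ G.inc e := by
          by_contra hzn
          rw [Finset.erase_eq_of_notMem hzn] at hlt
          omega
        obtain ⟨s, hs⟩ := Finset.card_eq_one.mp (hcard1 z hzin)
        have hsm : s ∈ H.inc e' ∩ X z := by rw [hs]; exact Finset.mem_singleton_self s
        obtain ⟨hse, hsX⟩ := Finset.mem_inter.mp hsm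
        have hsx : s = x := by
          by_contra hsx
          have hser : s ∈ (H.inc e').erase x := Finset.mem_erase.mpr ⟨hsx, hse⟩
          obtain ⟨c, hc, hsc⟩ := Finset.mem_biUnion.mp (hsubRV hser)
          have : c = z := part_eq hC' (Finset.mem_of_mem_erase hc) hz
            (Finset.mem_sdiff.mp hsc).1 hsX
          exact (Finset.mem_erase.mp hc).1 this
        -- every y in (inc e').erase x maps to a vertex of (inc e).erase z
        have hinj : ((H.inc e').erase x).card ≤ ((G.inc e).erase z).card := by
          have keyY : ∀ y ∈ (H.inc e').erase x,
              ∃ u, (u ∈ (G.inc e).erase z ∧ y ∈ X u) := by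
            intro y hy
            obtain ⟨hyx, hye⟩ := Finset.mem_erase.mp hy
            obtain ⟨u, hu, hyu⟩ := Finset.mem_biUnion.mp (hsubB hye)
            refine ⟨u, Finset.mem_erase.mpr ⟨?_, hu⟩, hyu⟩
            intro huz
            subst huz
            have : y ∈ H.inc e' ∩ X u := Finset.mem_inter.mpr ⟨hye, hyu⟩
            rw [hs] at this
            exact hyx ((Finset.mem_singleton.mp this).trans hsx)
          refine Finset.card_le_card_of_injOn
            (fun y => if h : ∃ u, (u ∈ (G.inc e).erase z ∧ y ∈ X u) then h.choose else z)
            (fun y hy => ?_) ?_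
          · simp only [dif_pos (keyY y hy)]
            exact (keyY y hy).choose_spec.1
          · intro y₁ hy₁ y₂ hy₂ heq
            have k₁ := keyY y₁ (Finset.mem_coe.mp hy₁)
            have k₂ := keyY y₂ (Finset.mem_coe.mp hy₂)
            simp only [dif_pos k₁, dif_pos k₂] at heq
            obtain ⟨hu₁, hy₁u⟩ := k₁.choose_spec
            obtain ⟨hu₂, hy₂u⟩ := k₂.choose_spec
            rw [← heq] at hy₂u
            have hucard := hcard1 k₁.choose (Finset.mem_of_mem_erase hu₁)
            obtain ⟨t, ht⟩ := Finset.card_eq_one.mp hucard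
            have h₁ : y₁ ∈ H.inc e' ∩ X k₁.choose := Finset.mem_inter.mpr
              ⟨Finset.mem_of_mem_erase (Finset.mem_coe.mp hy₁), hy₁u⟩
            have h₂ : y₂ ∈ H.inc e' ∩ X k₁.choose := Finset.mem_inter.mpr
              ⟨Finset.mem_of_mem_erase (Finset.mem_coe.mp hy₂), hy₂u⟩
            rw [ht] at h₁ h₂
            rw [Finset.mem_singleton.mp h₁, Finset.mem_singleton.mp h₂]
        omega
      exact Finset.mem_biUnion.mpr ⟨e, heS, Finset.mem_filter.mpr ⟨he'M, he'⟩⟩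
    · intro e' he'
      obtain ⟨e, heS, he'M⟩ := Finset.mem_biUnion.mp he'
      exact (Finset.mem_filter.mp he'M).2

/-- If `z` is non-separating, every vertex of the shrunk graph is reachable from `v`. -/
lemma shrink_reach (G : HGraph α) {z : α} (hz : z ∈ G.verts)
    (hns : ¬ G.IsSepVertex z) {v : α} (hv : v ∈ G.verts) (hvz : v ≠ z) :
    ∀ u ∈ (G.shrink z).verts, Relation.ReflTransGen (G.shrink z).Adj v u := by
  by_contra hcon
  push_neg at hcon
  obtain ⟨u, hu, hur⟩ := hcon
  apply hns
  set S := (G.shrink z).verts with hSdef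
  set R := S.filter (fun w => Relation.ReflTransGen (G.shrink z).Adj v w) with hRdef
  have hSsub : S = G.verts.erase z := rfl
  have hRS : R ⊆ S := Finset.filter_subset _ _
  have hvR : v ∈ R := Finset.mem_filter.mpr
    ⟨by rw [hSsub]; exact Finset.mem_erase.mpr ⟨hvz, hv⟩, Relation.ReflTransGen.refl⟩
  have huSR : u ∈ S \ R := Finset.mem_sdiff.mpr
    ⟨hu, fun hc => hur (Finset.mem_filter.mp hc).2⟩
  refine ⟨insert z R, insert z (S \ R), ?_, ?_, ?_, ?_, ?_⟩
  · rw [Finset.insert_union, Finset.union_insert, Finset.insert_idem,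
      Finset.union_sdiff_of_subset hRS, hSsub, Finset.insert_erase hz]
  · ext a
    simp only [Finset.mem_inter, Finset.mem_insert, Finset.mem_singleton, Finset.mem_sdiff]
    constructor
    · rintro ⟨(rfl | haR), (h | ⟨haS, hanR⟩)⟩
      · rfl
      · rfl
      · exact h
      · exact absurd haR hanR
    · rintro rfl
      exact ⟨Or.inl rfl, Or.inl rfl⟩
  · apply Finset.one_lt_card.mpr
    exact ⟨z, Finset.mem_insert_self z R, v, Finset.mem_insert_of_mem hvR, Ne.symm hvz⟩
  · apply Finset.one_lt_card.mpr
    refine ⟨z, Finset.mem_insert_self z _, u, Finset.mem_insert_of_mem huSR, ?_⟩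
    have huz : u ≠ z := by
      have := hu
      rw [hSsub] at this
      exact (Finset.mem_erase.mp this).1
    exact Ne.symm huz
  · intro e he
    by_cases h2 : 2 ≤ ((G.inc e).erase z).card
    · have heS : e ∈ (G.shrink z).edges := Finset.mem_filter.mpr ⟨he, h2⟩
      have hconn : ∀ a ∈ (G.inc e).erase z, ∀ b ∈ (G.inc e).erase z,
          Relation.ReflTransGen (G.shrink z).Adj a b := by
        intro a ha b hb
        rcases eq_or_ne a b with rfl | hne
        · exact Relation.ReflTransGen.refl
        · exact Relation.ReflTransGen.single ⟨hne, e, heS, ha, hb⟩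
      by_cases hex : ∃ a ∈ (G.inc e).erase z, a ∈ R
      · left
        intro b hb
        rcases eq_or_ne b z with rfl | hbz
        · exact Finset.mem_insert_self b _
        · have hb' : b ∈ (G.inc e).erase z := Finset.mem_erase.mpr ⟨hbz, hb⟩
          obtain ⟨a, ha, haR⟩ := hex
          have hreach : Relation.ReflTransGen (G.shrink z).Adj v b :=
            (Finset.mem_filter.mp haR).2.trans (hconn a ha b hb')
          exact Finset.mem_insert_of_mem (Finset.mem_filter.mpr
            ⟨(G.shrink z).inc_sub e heS hb', hreach⟩)
      · right
        push_neg at hex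
        intro b hb
        rcases eq_or_ne b z with rfl | hbz
        · exact Finset.mem_insert_self b _
        · have hb' : b ∈ (G.inc e).erase z := Finset.mem_erase.mpr ⟨hbz, hb⟩
          exact Finset.mem_insert_of_mem (Finset.mem_sdiff.mpr
            ⟨(G.shrink z).inc_sub e heS hb', fun hc => hex b hb' hc⟩)
    · have hc2 := G.inc_card e he
      have hzin : z ∈ G.inc e := by
        by_contra hzn
        rw [Finset.erase_eq_of_notMem hzn] at h2
        omega
      have hce := Finset.card_erase_of_mem hzin
      have h1 : ((G.inc e).erase z).card = 1 := by omega
      obtain ⟨w, hw⟩ := Finset.card_eq_one.mp h1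
      have hincw : G.inc e = insert z {w} := by rw [← Finset.insert_erase hzin, hw]
      have hwS : w ∈ S := by
        rw [hSsub]
        have hwer : w ∈ (G.inc e).erase z := hw ▸ Finset.mem_singleton_self w
        exact Finset.mem_erase.mpr ⟨(Finset.mem_erase.mp hwer).1, G.inc_sub e he
          (Finset.mem_of_mem_erase hwer)⟩
      by_cases hwR : w ∈ R
      · left
        rw [hincw]
        refine Finset.insert_subset (Finset.mem_insert_self z _) ?_
        rw [Finset.singleton_subset_iff]
        exact Finset.mem_insert_of_mem hwR
      · right
        rw [hincw]
        refine Finset.insert_subset (Finset.mem_insert_self z _) ?_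
        rw [Finset.singleton_subset_iff]
        exact Finset.mem_insert_of_mem (Finset.mem_sdiff.mpr ⟨hwS, hwR⟩)

end AuxIT


/-- in an uncolorable degree-feasible configuration,
|N_H(x) ∩ X_v| = μ_G(v,z) for every non-separating vertex z, v ≠ z and x ∈ X_z. -/
theorem uncolorable_nbhd_card (G : HGraph α) (X : α → Finset β) (H : HGraph β)
    (hG : G.Connected) (hC : IsCover G X H)
    (hdf : ∀ v ∈ G.verts, G.degree v ≤ (X v).card)
    (hunc : ¬ HasIT H G.verts X)
    (z : α) (hz : z ∈ G.verts) (hns : ¬ IsSepVertex G z)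
    (v : α) (hv : v ∈ G.verts) (hvz : v ≠ z) (x : β) (hx : x ∈ X z) :
    (H.nbhd x ∩ X v).card = G.mult v z := by
  refine le_antisymm (nbhd_card_le G X H hC hv hz hvz hx) ?_
  by_contra hlt
  push_neg at hlt
  apply hunc
  have hC' := reduced_isCover G X H hC hz hx
  have hvG' : v ∈ (G.shrink z).verts := Finset.mem_erase.mpr ⟨hvz, hv⟩
  have hdf' : ∀ u ∈ (G.shrink z).verts,
      (G.shrink z).degree u ≤ (X u \ H.nbhd x).card := by
    intro u hu
    obtain ⟨huz, huV⟩ := Finset.mem_erase.mp hu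
    have h1 := degree_shrink G (z := z) huz
    have h2 := nbhd_card_le G X H hC huV hz huz hx
    have h3 := Finset.card_inter_add_card_sdiff (X u) (H.nbhd x)
    have h4 := hdf u huV
    rw [Finset.inter_comm] at h3
    omega
  have hslack' : (G.shrink z).degree v < (X v \ H.nbhd x).card := by
    have h1 := degree_shrink G (z := z) hvz
    have h3 := Finset.card_inter_add_card_sdiff (X v) (H.nbhd x)
    have h4 := hdf v hv
    rw [Finset.inter_comm] at h3
    omega
  have hreach' := shrink_reach G hz hns hv hvz
  obtain ⟨T, hTind, hTcard⟩ :=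
    greedy (G.shrink z) (fun u => X u \ H.nbhd x) (reduceH G X H z x)
      hC' hdf' v hvG' hslack' hreach'
  set T₂ := T ∩ (G.shrink z).verts.biUnion (fun u => X u \ H.nbhd x) with hT₂def
  have hT₂sub : T₂ ⊆ (G.shrink z).verts.biUnion (fun u => X u \ H.nbhd x) :=
    Finset.inter_subset_right
  have hT₂ind : (reduceH G X H z x).IndepSet T₂ := fun e he hsub =>
    hTind e he (hsub.trans Finset.inter_subset_left)
  have hT₂card : ∀ u ∈ (G.shrink z).verts, (T₂ ∩ (X u \ H.nbhd x)).card = 1 := by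
    intro u hu
    have heq : T₂ ∩ (X u \ H.nbhd x) = T ∩ (X u \ H.nbhd x) := by
      apply Finset.Subset.antisymm
      · exact Finset.inter_subset_inter Finset.inter_subset_left (subset_refl _)
      · intro y hy
        obtain ⟨hyT, hyX⟩ := Finset.mem_inter.mp hy
        exact Finset.mem_inter.mpr ⟨Finset.mem_inter.mpr
          ⟨hyT, Finset.mem_biUnion.mpr ⟨u, hu, hyX⟩⟩, hyX⟩
    rw [heq]
    exact hTcard u hu
  have hRV : (G.shrink z).verts.biUnion (fun u => X u \ H.nbhd x)
      = reducedVerts G X H z x := rfl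
  refine ⟨insert x T₂, ?_, ?_⟩
  · intro e he hsub
    have h2e := H.inc_card e he
    have hsub' : (H.inc e).erase x ⊆ T₂ := by
      intro y hy
      have hyx := (Finset.mem_erase.mp hy).1
      rcases Finset.mem_insert.mp (hsub (Finset.mem_of_mem_erase hy)) with h | h
      · exact absurd h hyx
      · exact h
    by_cases h2 : 2 ≤ ((H.inc e).erase x).card
    · have heH' : e ∈ (reduceH G X H z x).edges :=
        Finset.mem_filter.mpr ⟨he, h2, hsub'.trans (hRV ▸ hT₂sub)⟩
      exact hT₂ind e heH' hsub'
    · have hxin : x ∈ H.inc e := by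
        by_contra hxn
        rw [Finset.erase_eq_of_notMem hxn] at h2
        omega
      have hce := Finset.card_erase_of_mem hxin
      have h1 : ((H.inc e).erase x).card = 1 := by omega
      obtain ⟨y, hy⟩ := Finset.card_eq_one.mp h1
      have hyer : y ∈ (H.inc e).erase x := hy ▸ Finset.mem_singleton_self y
      have hyT : y ∈ T₂ := hsub' hyer
      obtain ⟨c, hc, hyc⟩ := Finset.mem_biUnion.mp (hT₂sub hyT)
      apply (Finset.mem_sdiff.mp hyc).2
      refine Finset.mem_filter.mpr
        ⟨H.inc_sub e he (Finset.mem_of_mem_erase hyer), e, he, ?_⟩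
      rw [← Finset.insert_erase hxin, hy]
  · intro u huV
    by_cases huz : u = z
    · subst huz
      have hT₂z : ∀ y ∈ T₂, y ∉ X u := by
        intro y hyT hyX
        obtain ⟨c, hc, hyc⟩ := Finset.mem_biUnion.mp (hT₂sub hyT)
        obtain ⟨hcz, hcV⟩ := Finset.mem_erase.mp hc
        exact hcz (part_eq hC hcV huV (Finset.mem_sdiff.mp hyc).1 hyX)
      have : insert x T₂ ∩ X u = {x} := by
        ext y
        simp only [Finset.mem_inter, Finset.mem_insert, Finset.mem_singleton]
        constructor
        · rintro ⟨(rfl | hyT), hyX⟩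
          · rfl
          · exact absurd hyX (hT₂z y hyT)
        · rintro rfl
          exact ⟨Or.inl rfl, hx⟩
      rw [this, Finset.card_singleton]
    · have hu' : u ∈ (G.shrink z).verts := Finset.mem_erase.mpr ⟨huz, huV⟩
      have hxnu : x ∉ X u := fun h => huz (part_eq hC huV hz h hx)
      have heq : insert x T₂ ∩ X u = T₂ ∩ (X u \ H.nbhd x) := by
        ext y
        simp only [Finset.mem_inter, Finset.mem_insert, Finset.mem_sdiff]
        constructor
        · rintro ⟨(rfl | hyT), hyX⟩
          · exact absurd hyX hxnu
          · refine ⟨hyT, hyX, ?_⟩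
            obtain ⟨c, hc, hyc⟩ := Finset.mem_biUnion.mp (hT₂sub hyT)
            exact (Finset.mem_sdiff.mp hyc).2
        · rintro ⟨hyT, hyX, -⟩
          exact ⟨Or.inr hyT, hyX⟩
      rw [heq]
      exact hT₂card u hu'
end
end

section
/- Let (G,X,H) be an uncolorable degree-feasible configuration such that G has no separating vertex. Then G is regular, and for every two distinct vertices u, v of G, the hypergraph H[X_u ∪ X_v] is a μ_G(u,v)-regular bipartite graph with parts X_u and X_v. -/
open Finset

noncomputable section
open scoped Classical

variable {α β : Type} [DecidableEq α] [DecidableEq β]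

open HGraph

namespace DPaux

variable {α β : Type} [DecidableEq α] [DecidableEq β]

open HGraph

/-- Unpacked cover with explicit matching family. -/
structure CoverM (G : HGraph α) (X : α → Finset β) (H : HGraph β)
    (M : ℕ → Finset ℕ) : Prop where
  dis : ∀ u ∈ G.verts, ∀ v ∈ G.verts, u ≠ v → Disjoint (X u) (X v)
  hverts : H.verts = G.verts.biUnion X
  hindep : ∀ v ∈ G.verts, H.IndepSet (X v)
  msub : ∀ e ∈ G.edges, M e ⊆ H.edges
  mone : ∀ e ∈ G.edges, ∀ e' ∈ M e, ∀ v ∈ G.inc e, (H.inc e' ∩ X v).card = 1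
  mcov : ∀ e ∈ G.edges, ∀ e' ∈ M e, H.inc e' ⊆ (G.inc e).biUnion X
  mdisj : ∀ e ∈ G.edges, ∀ e₁ ∈ M e, ∀ e₂ ∈ M e, e₁ ≠ e₂ → Disjoint (H.inc e₁) (H.inc e₂)
  hedges : H.edges = G.edges.biUnion M

theorem isCover_iff {G : HGraph α} {X : α → Finset β} {H : HGraph β} :
    IsCover G X H ↔ ∃ M, CoverM G X H M := by
  constructor
  · rintro ⟨h1, h2, h3, M, h4, h5⟩
    exact ⟨M, h1, h2, h3, fun e he => (h4 e he).1,
      fun e he e' he' v hv => ((h4 e he).2.1 e' he').1 v hv,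
      fun e he e' he' => ((h4 e he).2.1 e' he').2,
      fun e he => (h4 e he).2.2, h5⟩
  · rintro ⟨M, hM⟩
    exact ⟨hM.dis, hM.hverts, hM.hindep, M, fun e he =>
      ⟨hM.msub e he, fun e' he' => ⟨hM.mone e he e' he', hM.mcov e he e' he'⟩,
        hM.mdisj e he⟩, hM.hedges⟩

variable {G : HGraph α} {X : α → Finset β} {H : HGraph β} {M : ℕ → Finset ℕ}

theorem CoverM.exists_edge (hM : CoverM G X H M) {e : ℕ} (he : e ∈ H.edges) :
    ∃ f ∈ G.edges, e ∈ M f := by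
  have := hM.hedges ▸ he
  exact Finset.mem_biUnion.mp this

/-- the unique point of a matching edge in a given list -/
theorem CoverM.inter_singleton (hM : CoverM G X H M) {f e : ℕ} (hf : f ∈ G.edges)
    (he : e ∈ M f) {w : α} (hw : w ∈ G.verts) {x : β} (hxw : x ∈ X w)
    (hxe : x ∈ H.inc e) : w ∈ G.inc f ∧ H.inc e ∩ X w = {x} := by
  have hx2 := hM.mcov f hf e he hxe
  obtain ⟨z, hz, hxz⟩ := Finset.mem_biUnion.mp hx2
  have hzv : z ∈ G.verts := G.inc_sub f hf hz
  have hzw : z = w := by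
    by_contra hne
    exact (Finset.disjoint_left.mp (hM.dis z hzv w hw hne) hxz) hxw
  subst hzw
  refine ⟨hz, ?_⟩
  have h1 := hM.mone f hf e he z hz
  obtain ⟨y, hy⟩ := Finset.card_eq_one.mp h1
  have hxy : x ∈ H.inc e ∩ X z := Finset.mem_inter.mpr ⟨hxe, hxw⟩
  rw [hy] at hxy ⊢
  rw [Finset.mem_singleton.mp hxy]

theorem CoverM.card_inc (hM : CoverM G X H M) {f e : ℕ} (hf : f ∈ G.edges)
    (he : e ∈ M f) : (H.inc e).card = (G.inc f).card := by
  have hrep : H.inc e = (G.inc f).biUnion (fun v => H.inc e ∩ X v) := by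
    apply Finset.Subset.antisymm
    · intro y hy
      obtain ⟨z, hz, hyz⟩ := Finset.mem_biUnion.mp (hM.mcov f hf e he hy)
      exact Finset.mem_biUnion.mpr ⟨z, hz, Finset.mem_inter.mpr ⟨hy, hyz⟩⟩
    · intro y hy
      obtain ⟨z, _, hyz⟩ := Finset.mem_biUnion.mp hy
      exact (Finset.mem_inter.mp hyz).1
  rw [hrep, Finset.card_biUnion, Finset.sum_congr rfl
    (fun v hv => hM.mone f hf e he v hv), Finset.sum_const, smul_eq_mul, mul_one]
  intro a ha b hb hab
  have hav : a ∈ G.verts := G.inc_sub f hf ha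
  have hbv : b ∈ G.verts := G.inc_sub f hf hb
  exact (Finset.disjoint_right.mpr fun y hy1 hy2 =>
    (Finset.disjoint_left.mp (hM.dis a hav b hbv hab) (Finset.mem_inter.mp hy2).2)
    (Finset.mem_inter.mp hy1).2)

end DPaux
namespace DPaux

variable {α β : Type} [DecidableEq α] [DecidableEq β]
open HGraph

variable {G : HGraph α} {X : α → Finset β} {H : HGraph β} {M : ℕ → Finset ℕ}
variable {w : α} {x : β}

theorem mem_rv {y : β} :
    y ∈ reducedVerts G X H w x ↔ ∃ u, (u ∈ G.verts ∧ u ≠ w) ∧ y ∈ X u ∧ y ∉ H.nbhd x := by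
  unfold reducedVerts
  simp only [Finset.mem_biUnion, shrink, Finset.mem_erase, Finset.mem_sdiff]
  constructor
  · rintro ⟨u, ⟨h1, h2⟩, h3, h4⟩; exact ⟨u, ⟨h2, h1⟩, h3, h4⟩
  · rintro ⟨u, ⟨h1, h2⟩, h3, h4⟩; exact ⟨u, ⟨h2, h1⟩, h3, h4⟩

theorem rv_X (hM : CoverM G X H M) {y : β} {v : α} (hy : y ∈ reducedVerts G X H w x)
    (hyv : y ∈ X v) (hv : v ∈ G.verts) : v ≠ w ∧ y ∉ H.nbhd x := by
  obtain ⟨u, ⟨hu, huw⟩, hyu, hnb⟩ := mem_rv.mp hy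
  have : u = v := by
    by_contra hne
    exact (Finset.disjoint_left.mp (hM.dis u hu v hv hne) hyu) hyv
  subst this
  exact ⟨huw, hnb⟩

theorem ne_of_X (hM : CoverM G X H M) {v z : α} {a b : β} (hv : v ∈ G.verts)
    (hz : z ∈ G.verts) (hvz : v ≠ z) (ha : a ∈ X v) (hb : b ∈ X z) : a ≠ b := by
  rintro rfl
  exact (Finset.disjoint_left.mp (hM.dis v hv z hz hvz) ha) hb

/-- degree splits as shrink-degree plus multiplicity -/
theorem degree_shrink (hzw : (z : α) ≠ w) (hz : z ∈ G.verts) :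
    G.degree z = (G.shrink w).degree z + G.mult z w := by
  classical
  have key : ∀ f ∈ G.edges.filter (fun f => z ∈ G.inc f),
      (¬ 2 ≤ ((G.inc f).erase w).card) ↔ G.inc f = {z, w} := by
    intro f hf
    obtain ⟨hfe, hzf⟩ := Finset.mem_filter.mp hf
    constructor
    · intro hlt
      by_cases hwf : w ∈ G.inc f
      · have h1 : (G.inc f).card = ((G.inc f).erase w).card + 1 := by
          rw [Finset.card_erase_of_mem hwf]
          have := G.inc_card f hfe
          omega
        have hcf : (G.inc f).card = 2 := by
          have := G.inc_card f hfe; omega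
        have hsub : ({z, w} : Finset α) ⊆ G.inc f := by
          intro a ha
          rcases Finset.mem_insert.mp ha with rfl | ha
          · exact hzf
          · rwa [Finset.mem_singleton.mp ha]
        have hc2 : ({z, w} : Finset α).card = 2 := by
          rw [Finset.card_insert_of_notMem (by simpa using hzw), Finset.card_singleton]
        exact (Finset.eq_of_subset_of_card_le hsub (by omega)).symm
      · rw [Finset.erase_eq_of_notMem hwf] at hlt
        exact absurd (G.inc_card f hfe) hlt
    · intro heq
      rw [heq]
      have : ({z, w} : Finset α).erase w = {z} := by
        ext a
        simp only [Finset.mem_erase, Finset.mem_insert, Finset.mem_singleton]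
        constructor
        · rintro ⟨h1, h2 | h2⟩
          · exact h2
          · exact absurd h2 h1
        · rintro rfl; exact ⟨hzw, Or.inl rfl⟩
      rw [this, Finset.card_singleton]
      omega
  -- degree set splits
  have hsplit := Finset.card_filter_add_card_filter_not
    (s := G.edges.filter (fun f => z ∈ G.inc f))
    (p := fun f => 2 ≤ ((G.inc f).erase w).card)
  have h1 : (G.edges.filter (fun f => z ∈ G.inc f)).filter
      (fun f => 2 ≤ ((G.inc f).erase w).card) = (G.shrink w).edges.filter
      (fun f => z ∈ (G.shrink w).inc f) := by
    ext f
    simp only [Finset.mem_filter, shrink, Finset.mem_erase]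
    constructor
    · rintro ⟨⟨h1, h2⟩, h3⟩; exact ⟨⟨h1, h3⟩, hzw, h2⟩
    · rintro ⟨⟨h1, h3⟩, _, h2⟩; exact ⟨⟨h1, h2⟩, h3⟩
  have h2 : (G.edges.filter (fun f => z ∈ G.inc f)).filter
      (fun f => ¬ 2 ≤ ((G.inc f).erase w).card) =
      G.edges.filter (fun f => G.inc f = {z, w}) := by
    ext f
    simp only [Finset.mem_filter]
    constructor
    · rintro ⟨⟨h1, h2⟩, h3⟩
      exact ⟨h1, (key f (Finset.mem_filter.mpr ⟨h1, h2⟩)).mp h3⟩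
    · rintro ⟨h1, h2⟩
      have hzf : z ∈ G.inc f := by rw [h2]; simp
      exact ⟨⟨h1, hzf⟩, (key f (Finset.mem_filter.mpr ⟨h1, hzf⟩)).mpr h2⟩
  have c1 := congrArg Finset.card h1
  have c2 := congrArg Finset.card h2
  unfold HGraph.degree HGraph.mult
  omega

/-- the number of `x`-neighbours in `X z` is at most the multiplicity -/
theorem nbhd_count (hM : CoverM G X H M) {z : α} (hw : w ∈ G.verts) (hz : z ∈ G.verts)
    (hzw : z ≠ w) (hx : x ∈ X w) :
    (X z ∩ H.nbhd x).card ≤ G.mult z w := by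
  classical
  by_contra hlt
  push_neg at hlt
  have hex : ∀ y ∈ X z ∩ H.nbhd x,
      ∃ f, f ∈ G.edges.filter (fun f => G.inc f = {z, w}) ∧ ∃ e ∈ M f, H.inc e = {x, y} := by
    intro y hy
    obtain ⟨hyz, hynb⟩ := Finset.mem_inter.mp hy
    obtain ⟨hyH, e, he, hince⟩ := Finset.mem_filter.mp hynb
    obtain ⟨f, hf, hef⟩ := hM.exists_edge he
    have hxe : x ∈ H.inc e := by rw [hince]; simp
    have hye : y ∈ H.inc e := by rw [hince]; simp
    have hwz' := hM.inter_singleton hf hef hw hx hxe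
    have hzz' := hM.inter_singleton hf hef hz hyz hye
    have hxy : x ≠ y := ne_of_X hM hw hz hzw.symm hx hyz
    have hcard2 : (H.inc e).card = 2 := by
      rw [hince, Finset.card_insert_of_notMem (by simpa using hxy), Finset.card_singleton]
    have hcf : (G.inc f).card = 2 := by rw [← hM.card_inc hf hef, hcard2]
    have hsub : ({z, w} : Finset α) ⊆ G.inc f := by
      intro a ha
      rcases Finset.mem_insert.mp ha with rfl | ha
      · exact hzz'.1
      · rw [Finset.mem_singleton.mp ha]; exact hwz'.1
    have hc2 : ({z, w} : Finset α).card = 2 := by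
      rw [Finset.card_insert_of_notMem (by simpa using hzw), Finset.card_singleton]
    have : G.inc f = {z, w} := (Finset.eq_of_subset_of_card_le hsub (by omega)).symm
    exact ⟨f, Finset.mem_filter.mpr ⟨hf, this⟩, e, hef, hince⟩
  set φ : β → ℕ := fun y =>
    if h : ∃ f, f ∈ G.edges.filter (fun f => G.inc f = {z, w}) ∧ ∃ e ∈ M f, H.inc e = {x, y}
    then h.choose else 0 with hφ
  have hmaps : ∀ y ∈ X z ∩ H.nbhd x, φ y ∈ G.edges.filter (fun f => G.inc f = {z, w}) := by
    intro y hy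
    have h := hex y hy
    rw [hφ]; simp only [dif_pos h]
    exact h.choose_spec.1
  obtain ⟨y₁, hy₁, y₂, hy₂, hne, heq⟩ :=
    Finset.exists_ne_map_eq_of_card_lt_of_maps_to hlt hmaps
  have h1 := hex y₁ hy₁
  have h2 := hex y₂ hy₂
  rw [hφ] at heq
  simp only [dif_pos h1, dif_pos h2] at heq
  obtain ⟨e₁, he₁, hi₁⟩ := h1.choose_spec.2
  obtain ⟨e₂, he₂, hi₂⟩ := h2.choose_spec.2
  have hf1 := h1.choose_spec.1
  have hfG : h1.choose ∈ G.edges := (Finset.mem_filter.mp hf1).1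
  rw [← heq] at he₂
  have hx1 : x ∈ H.inc e₁ := by rw [hi₁]; simp
  have hx2 : x ∈ H.inc e₂ := by rw [hi₂]; simp
  have hee : e₁ = e₂ := by
    by_contra hnee
    exact (Finset.disjoint_left.mp (hM.mdisj _ hfG e₁ he₁ e₂ he₂ hnee) hx1) hx2
  rw [hee, hi₂] at hi₁
  have hy1z : y₁ ∈ X z := (Finset.mem_inter.mp hy₁).1
  have hxy1 : x ≠ y₁ := ne_of_X hM hw hz hzw.symm hx hy1z
  have : y₁ ∈ ({x, y₂} : Finset β) := by rw [hi₁]; simp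
  rcases Finset.mem_insert.mp this with h | h
  · exact hxy1 h.symm
  · exact hne (Finset.mem_singleton.mp h)

end DPaux
namespace DPaux

variable {α β : Type} [DecidableEq α] [DecidableEq β]
open HGraph

variable {G : HGraph α} {X : α → Finset β} {H : HGraph β} {M : ℕ → Finset ℕ}
variable {w : α} {x : β}

theorem cover_reduce (hM : CoverM G X H M) (hw : w ∈ G.verts) (hx : x ∈ X w) :
    CoverM (G.shrink w) (fun z => X z \ H.nbhd x) (reduceH G X H w x)
      (fun f => M f ∩ (reduceH G X H w x).edges) := by
  classical
  set H' := reduceH G X H w x with hH'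
  have hvG' : ∀ v ∈ (G.shrink w).verts, v ∈ G.verts ∧ v ≠ w := by
    intro v hv
    have := Finset.mem_erase.mp hv
    exact ⟨this.2, this.1⟩
  have hedgeG' : ∀ f ∈ (G.shrink w).edges, f ∈ G.edges ∧ 2 ≤ ((G.inc f).erase w).card :=
    fun f hf => Finset.mem_filter.mp hf
  have hedgeH' : ∀ e ∈ H'.edges, e ∈ H.edges ∧ 2 ≤ ((H.inc e).erase x).card ∧
      (H.inc e).erase x ⊆ reducedVerts G X H w x := by
    intro e he
    obtain ⟨h1, h2, h3⟩ := Finset.mem_filter.mp he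
    exact ⟨h1, h2, h3⟩
  constructor
  · intro u hu v hv huv
    exact (hM.dis u (hvG' u hu).1 v (hvG' v hv).1 huv).mono
      Finset.sdiff_subset Finset.sdiff_subset
  · rfl
  · -- independence
    intro v hv e he hsub
    obtain ⟨heH, hc2, hrv⟩ := hedgeH' e he
    obtain ⟨f, hf, hef⟩ := hM.exists_edge heH
    have hvv := (hvG' v hv).1
    have hle : (H.inc e ∩ X v).card ≤ 1 := by
      by_cases hvf : v ∈ G.inc f
      · exact le_of_eq (hM.mone f hf e hef v hvf)
      · have : H.inc e ∩ X v = ∅ := by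
          rw [Finset.eq_empty_iff_forall_notMem]
          intro y hy
          obtain ⟨hy1, hy2⟩ := Finset.mem_inter.mp hy
          obtain ⟨u, hu, hyu⟩ := Finset.mem_biUnion.mp (hM.mcov f hf e hef hy1)
          have huv : u = v := by
            by_contra hne
            exact (Finset.disjoint_left.mp
              (hM.dis u (G.inc_sub f hf hu) v hvv hne) hyu) hy2
          exact hvf (huv ▸ hu)
        rw [this]; simp
    have hsub2 : (H.inc e).erase x ⊆ H.inc e ∩ X v := by
      intro y hy
      exact Finset.mem_inter.mpr ⟨Finset.mem_of_mem_erase hy,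
        (Finset.mem_sdiff.mp (hsub hy)).1⟩
    have := Finset.card_le_card hsub2
    omega
  · intro f hf
    exact Finset.inter_subset_right
  · -- mone
    intro f hf e he v hv
    obtain ⟨hfG, _⟩ := hedgeG' f hf
    obtain ⟨heM, heH'⟩ := Finset.mem_inter.mp he
    obtain ⟨heH, hc2, hrv⟩ := hedgeH' e heH'
    have hvf : v ∈ G.inc f := Finset.mem_of_mem_erase hv
    have hvw : v ≠ w := (Finset.mem_erase.mp hv).1
    have hvv : v ∈ G.verts := G.inc_sub f hfG hvf
    obtain ⟨y, hy⟩ := Finset.card_eq_one.mp (hM.mone f hfG e heM v hvf)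
    have hye : y ∈ H.inc e := by
      have : y ∈ H.inc e ∩ X v := by rw [hy]; simp
      exact (Finset.mem_inter.mp this).1
    have hyv : y ∈ X v := by
      have : y ∈ H.inc e ∩ X v := by rw [hy]; simp
      exact (Finset.mem_inter.mp this).2
    have hyx : y ≠ x := ne_of_X hM hvv hw hvw hyv hx
    have hyer : y ∈ (H.inc e).erase x := Finset.mem_erase.mpr ⟨hyx, hye⟩
    have hynb : y ∉ H.nbhd x := (rv_X hM (hrv hyer) hyv hvv).2
    have : (reduceH G X H w x).inc e ∩ (X v \ H.nbhd x) = {y} := by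
      apply Finset.Subset.antisymm
      · intro a ha
        obtain ⟨ha1, ha2⟩ := Finset.mem_inter.mp ha
        have : a ∈ H.inc e ∩ X v := Finset.mem_inter.mpr
          ⟨Finset.mem_of_mem_erase ha1, (Finset.mem_sdiff.mp ha2).1⟩
        rw [hy] at this; exact this
      · intro a ha
        rw [Finset.mem_singleton.mp ha]
        exact Finset.mem_inter.mpr ⟨hyer, Finset.mem_sdiff.mpr ⟨hyv, hynb⟩⟩
    rw [this]; simp
  · -- mcov
    intro f hf e he z hz
    obtain ⟨hfG, _⟩ := hedgeG' f hf
    obtain ⟨heM, heH'⟩ := Finset.mem_inter.mp he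
    obtain ⟨heH, hc2, hrv⟩ := hedgeH' e heH'
    have hzrv := hrv hz
    obtain ⟨u, ⟨hu, huw⟩, hzu, hznb⟩ := mem_rv.mp hzrv
    obtain ⟨u₂, hu₂, hzu₂⟩ := Finset.mem_biUnion.mp
      (hM.mcov f hfG e heM (Finset.mem_of_mem_erase hz))
    have : u₂ = u := by
      by_contra hne
      exact (Finset.disjoint_left.mp
        (hM.dis u₂ (G.inc_sub f hfG hu₂) u hu hne) hzu₂) hzu
    subst this
    refine Finset.mem_biUnion.mpr ⟨u₂, ?_, Finset.mem_sdiff.mpr ⟨hzu, hznb⟩⟩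
    exact Finset.mem_erase.mpr ⟨huw, hu₂⟩
  · -- mdisj
    intro f hf e₁ he₁ e₂ he₂ hne
    have hfG := (hedgeG' f hf).1
    exact (hM.mdisj f hfG e₁ (Finset.mem_inter.mp he₁).1 e₂
      (Finset.mem_inter.mp he₂).1 hne).mono (Finset.erase_subset x _)
      (Finset.erase_subset x _)
  · -- hedges
    apply Finset.Subset.antisymm
    · intro e he
      obtain ⟨heH, hc2, hrv⟩ := hedgeH' e he
      obtain ⟨f, hf, hef⟩ := hM.exists_edge heH
      have hkey : 2 ≤ ((G.inc f).erase w).card := by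
        by_cases hwf : w ∈ G.inc f
        · obtain ⟨y₀, hy₀⟩ := Finset.card_eq_one.mp (hM.mone f hf e hef w hwf)
          have hy₀e : y₀ ∈ H.inc e ∧ y₀ ∈ X w := by
            have : y₀ ∈ H.inc e ∩ X w := by rw [hy₀]; simp
            exact Finset.mem_inter.mp this
          have hy₀x : y₀ = x := by
            by_contra hne
            have : y₀ ∈ (H.inc e).erase x := Finset.mem_erase.mpr ⟨hne, hy₀e.1⟩
            exact (rv_X hM (hrv this) hy₀e.2 hw).1 rfl
          have hxe : x ∈ H.inc e := hy₀x ▸ hy₀e.1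
          have e1 : ((G.inc f).erase w).card + 1 = (G.inc f).card :=
            Finset.card_erase_add_one hwf
          have e2 : ((H.inc e).erase x).card + 1 = (H.inc e).card :=
            Finset.card_erase_add_one hxe
          have e3 := hM.card_inc hf hef
          omega
        · have hxe : x ∉ H.inc e := by
            intro hxe
            exact hwf (hM.inter_singleton hf hef hw hx hxe).1
          rw [Finset.erase_eq_of_notMem hwf]
          rw [Finset.erase_eq_of_notMem hxe] at hc2
          rw [← hM.card_inc hf hef]
          exact hc2
      have hfG' : f ∈ (G.shrink w).edges := Finset.mem_filter.mpr ⟨hf, hkey⟩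
      exact Finset.mem_biUnion.mpr ⟨f, hfG', Finset.mem_inter.mpr ⟨hef, he⟩⟩
    · intro e he
      obtain ⟨f, hf, hef⟩ := Finset.mem_biUnion.mp he
      exact (Finset.mem_inter.mp hef).2

theorem ext_reduce (hM : CoverM G X H M) (hw : w ∈ G.verts) (hx : x ∈ X w) :
    HasIT (reduceH G X H w x) (G.shrink w).verts (fun z => X z \ H.nbhd x) →
    HasIT H G.verts X := by
  classical
  rintro ⟨T0, hind0, htr0⟩
  set rv := reducedVerts G X H w x with hrv
  set T' := T0 ∩ rv with hT'
  have hT'rv : T' ⊆ rv := Finset.inter_subset_right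
  have hind' : ∀ e ∈ (reduceH G X H w x).edges, ¬ (reduceH G X H w x).inc e ⊆ T' := by
    intro e he hsub
    exact hind0 e he (hsub.trans Finset.inter_subset_left)
  have htr' : ∀ v ∈ (G.shrink w).verts, (T' ∩ (X v \ H.nbhd x)).card = 1 := by
    intro v hv
    have h1 : X v \ H.nbhd x ⊆ rv := by
      intro y hy
      exact Finset.mem_biUnion.mpr ⟨v, hv, hy⟩
    have : T' ∩ (X v \ H.nbhd x) = T0 ∩ (X v \ H.nbhd x) := by
      rw [hT', Finset.inter_assoc, Finset.inter_comm rv, ← Finset.inter_assoc,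
        Finset.inter_eq_left.mpr]
      exact Finset.inter_subset_right.trans h1
    rw [this]
    exact htr0 v hv
  have hTXw : ∀ {y : β}, y ∈ T' → y ∈ X w → False := by
    intro y hy hyw
    exact (rv_X hM (hT'rv hy) hyw hw).1 rfl
  have hTX : ∀ {y : β} {v : α}, y ∈ T' → v ∈ G.verts → y ∈ X v → y ∉ H.nbhd x := by
    intro y v hy hv hyv
    exact (rv_X hM (hT'rv hy) hyv hv).2
  refine ⟨insert x T', ?_, ?_⟩
  · -- independence
    intro e he hsub
    obtain ⟨f, hf, hef⟩ := hM.exists_edge he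
    by_cases hwf : w ∈ G.inc f
    · obtain ⟨y₀, hy₀⟩ := Finset.card_eq_one.mp (hM.mone f hf e hef w hwf)
      have hy₀e : y₀ ∈ H.inc e ∧ y₀ ∈ X w := by
        have : y₀ ∈ H.inc e ∩ X w := by rw [hy₀]; simp
        exact Finset.mem_inter.mp this
      have hy₀x : y₀ = x := by
        rcases Finset.mem_insert.mp (hsub hy₀e.1) with h | h
        · exact h
        · exact absurd hy₀e.2 (fun hh => hTXw h hh)
      have hxe : x ∈ H.inc e := hy₀x ▸ hy₀e.1
      have hsub' : (H.inc e).erase x ⊆ T' := by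
        intro z hz
        obtain ⟨hzx, hze⟩ := Finset.mem_erase.mp hz
        rcases Finset.mem_insert.mp (hsub hze) with h | h
        · exact absurd h hzx
        · exact h
      have hcard := hM.card_inc hf hef
      by_cases hbig : 3 ≤ (G.inc f).card
      · have heH' : e ∈ (reduceH G X H w x).edges := by
          refine Finset.mem_filter.mpr ⟨he, ?_, hsub'.trans hT'rv⟩
          have := Finset.card_erase_add_one hxe
          omega
        exact hind' e heH' hsub'
      · -- ordinary edge: the partner is a neighbour of x, contradiction
        have hc2 : (G.inc f).card = 2 := by
          have := G.inc_card f hf; omega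
        have hce : ((H.inc e).erase x).card = 1 := by
          have := Finset.card_erase_add_one hxe; omega
        obtain ⟨y', hy'⟩ := Finset.card_eq_one.mp hce
        have hy'mem : y' ∈ (H.inc e).erase x := by rw [hy']; simp
        obtain ⟨hy'x, hy'e⟩ := Finset.mem_erase.mp hy'mem
        have hincrep : H.inc e = {x, y'} := by
          have h1 : H.inc e = insert x ((H.inc e).erase x) :=
            (Finset.insert_erase hxe).symm
          rw [h1, hy']
        have hy'nb : y' ∈ H.nbhd x := by
          refine Finset.mem_filter.mpr ⟨H.inc_sub e he hy'e, e, he, hincrep⟩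
        have hy'T : y' ∈ T' := hsub' hy'mem
        obtain ⟨u, ⟨hu, huw⟩, hy'u, hy'nb'⟩ := mem_rv.mp (hT'rv hy'T)
        exact hy'nb' hy'nb
    · have hxe : x ∉ H.inc e := by
        intro hxe
        exact hwf (hM.inter_singleton hf hef hw hx hxe).1
      have hsub' : H.inc e ⊆ T' := by
        intro z hz
        rcases Finset.mem_insert.mp (hsub hz) with h | h
        · exact absurd (h ▸ hz) hxe
        · exact h
      have heH' : e ∈ (reduceH G X H w x).edges := by
        refine Finset.mem_filter.mpr ⟨he, ?_, ?_⟩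
        · rw [Finset.erase_eq_of_notMem hxe]
          exact H.inc_card e he
        · rw [Finset.erase_eq_of_notMem hxe]
          exact hsub'.trans hT'rv
      apply hind' e heH'
      show (H.inc e).erase x ⊆ T'
      rw [Finset.erase_eq_of_notMem hxe]
      exact hsub'
  · -- transversal
    intro v hv
    by_cases hvw : v = w
    · subst hvw
      have hempty : T' ∩ X v = ∅ := by
        rw [Finset.eq_empty_iff_forall_notMem]
        intro y hy
        obtain ⟨h1, h2⟩ := Finset.mem_inter.mp hy
        exact hTXw h1 h2
      rw [Finset.insert_inter_of_mem hx, hempty]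
      simp
    · have hxv : x ∉ X v := fun hxv =>
        (ne_of_X hM hw hv (Ne.symm hvw) hx hxv) rfl
      rw [Finset.insert_inter_of_notMem hxv]
      have heq : T' ∩ X v = T' ∩ (X v \ H.nbhd x) := by
        apply Finset.Subset.antisymm
        · intro y hy
          obtain ⟨h1, h2⟩ := Finset.mem_inter.mp hy
          exact Finset.mem_inter.mpr ⟨h1, Finset.mem_sdiff.mpr ⟨h2, hTX h1 hv h2⟩⟩
        · intro y hy
          obtain ⟨h1, h2⟩ := Finset.mem_inter.mp hy
          exact Finset.mem_inter.mpr ⟨h1, (Finset.mem_sdiff.mp h2).1⟩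
      rw [heq]
      exact htr' v (Finset.mem_erase.mpr ⟨hvw, hv⟩)

end DPaux
namespace DPaux

variable {α β : Type} [DecidableEq α] [DecidableEq β]
open HGraph

variable {G : HGraph α} {X : α → Finset β} {H : HGraph β}

theorem adj_shrink {w a b : α} (ha : a ≠ w) (hb : b ≠ w) (h : G.Adj a b) :
    (G.shrink w).Adj a b := by
  obtain ⟨hab, f, hf, haf, hbf⟩ := h
  have hsub : ({a, b} : Finset α) ⊆ (G.inc f).erase w := by
    intro c hc
    rcases Finset.mem_insert.mp hc with rfl | hc
    · exact Finset.mem_erase.mpr ⟨ha, haf⟩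
    · rw [Finset.mem_singleton.mp hc]; exact Finset.mem_erase.mpr ⟨hb, hbf⟩
  have hcard : 2 ≤ ((G.inc f).erase w).card := by
    have h2 : ({a, b} : Finset α).card = 2 := by
      rw [Finset.card_insert_of_notMem (by simpa using hab), Finset.card_singleton]
    calc 2 = ({a, b} : Finset α).card := h2.symm
    _ ≤ _ := Finset.card_le_card hsub
  exact ⟨hab, f, Finset.mem_filter.mpr ⟨hf, hcard⟩,
    Finset.mem_erase.mpr ⟨ha, haf⟩, Finset.mem_erase.mpr ⟨hb, hbf⟩⟩

theorem adj_mem_verts {a b : α} (h : G.Adj a b) : a ∈ G.verts ∧ b ∈ G.verts := by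
  obtain ⟨_, f, hf, haf, hbf⟩ := h
  exact ⟨G.inc_sub f hf haf, G.inc_sub f hf hbf⟩

theorem degree_pos_of_adj {a b : α} (h : G.Adj a b) : 1 ≤ G.degree a := by
  obtain ⟨_, f, hf, haf, _⟩ := h
  exact Finset.card_pos.mpr ⟨f, Finset.mem_filter.mpr ⟨hf, haf⟩⟩

theorem hasIT_of_verts_empty (hC : IsCover G X H) (hv : G.verts = ∅) :
    HasIT H G.verts X := by
  obtain ⟨M, hM⟩ := isCover_iff.mp hC
  refine ⟨∅, ?_, ?_⟩
  · intro e he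
    obtain ⟨f, hf, _⟩ := hM.exists_edge he
    have h1 := G.inc_sub f hf
    rw [hv, Finset.subset_empty] at h1
    have h2 := G.inc_card f hf
    rw [h1] at h2
    simp at h2
  · intro v hv'
    rw [hv] at hv'
    simp at hv'

/-- Main greedy lemma: a degree-feasible cover in which every vertex can reach a
vertex with slack admits an independent transversal. -/
theorem colorable_of_slack : ∀ (n : ℕ) (G : HGraph α) (X : α → Finset β)
    (H : HGraph β), G.verts.card ≤ n → IsCover G X H →
    (∀ v ∈ G.verts, G.degree v ≤ (X v).card) →
    (∀ u ∈ G.verts, ∃ v₀ ∈ G.verts, G.degree v₀ < (X v₀).card ∧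
      Relation.ReflTransGen G.Adj u v₀) →
    HasIT H G.verts X := by
  intro n
  induction n with
  | zero =>
    intro G X H hcard hC hdf hP
    exact hasIT_of_verts_empty hC (Finset.card_eq_zero.mp (Nat.le_zero.mp hcard))
  | succ n IH =>
    intro G X H hcard hC hdf hP
    by_cases hne : G.verts = ∅
    · exact hasIT_of_verts_empty hC hne
    have hvne : G.verts.Nonempty := Finset.nonempty_of_ne_empty hne
    obtain ⟨M, hM⟩ := isCover_iff.mp hC
    classical
    set S := G.verts.filter (fun v => G.degree v < (X v).card) with hS
    set Sk : ℕ → Finset α := fun k => Nat.rec S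
      (fun _ p => p ∪ G.verts.filter (fun z => ∃ s ∈ p, G.Adj z s)) k with hSk
    have hSk0 : Sk 0 = S := rfl
    have hSks : ∀ k, Sk (k + 1) =
        Sk k ∪ G.verts.filter (fun z => ∃ s ∈ Sk k, G.Adj z s) := fun k => rfl
    have hSkv : ∀ k, Sk k ⊆ G.verts := by
      intro k
      induction k with
      | zero => exact Finset.filter_subset _ _
      | succ k ih =>
        rw [hSks k]
        exact Finset.union_subset ih (Finset.filter_subset _ _)
    have hSkstep : ∀ k, Sk k ⊆ Sk (k + 1) := by
      intro k; rw [hSks k]; exact Finset.subset_union_left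
    have hSkmono : ∀ {k l}, k ≤ l → Sk k ⊆ Sk l := by
      intro k l hkl
      induction hkl with
      | refl => exact Finset.Subset.refl _
      | step h ih => exact ih.trans (hSkstep _)
    have hreach : ∀ u ∈ G.verts, ∃ k, u ∈ Sk k := by
      intro u hu
      obtain ⟨v₀, hv₀, hslack, hrtg⟩ := hP u hu
      clear hu
      induction hrtg using Relation.ReflTransGen.head_induction_on with
      | refl => exact ⟨0, Finset.mem_filter.mpr ⟨hv₀, hslack⟩⟩
      | head hadj _ ih =>
        rename_i a c _
        obtain ⟨k, hk⟩ := ih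
        refine ⟨k + 1, ?_⟩
        rw [hSks k]
        exact Finset.mem_union_right _ (Finset.mem_filter.mpr
          ⟨(adj_mem_verts hadj).1, c, hk, hadj⟩)
    set D : α → ℕ := fun u => if h : ∃ k, u ∈ Sk k then Nat.find h else 0 with hD
    have hD1 : ∀ u ∈ G.verts, u ∈ Sk (D u) := by
      intro u hu
      have h := hreach u hu
      rw [hD]; simp only [dif_pos h]
      exact Nat.find_spec h
    have hD2 : ∀ u k, u ∈ Sk k → D u ≤ k := by
      intro u k huk
      have h : ∃ k, u ∈ Sk k := ⟨k, huk⟩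
      rw [hD]; simp only [dif_pos h]
      exact Nat.find_le huk
    obtain ⟨ustar, hustar, hmax⟩ := G.verts.exists_max_image D hvne
    -- X ustar is nonempty
    have hXne : (X ustar).Nonempty := by
      rw [← Finset.card_pos]
      by_cases hd0 : D ustar = 0
      · have := hD1 ustar hustar
        rw [hd0, hSk0, hS] at this
        have := (Finset.mem_filter.mp this).2
        omega
      · obtain ⟨m, hm⟩ : ∃ m, D ustar = m + 1 := ⟨D ustar - 1, by omega⟩
        have h1 := hD1 ustar hustar
        rw [hm, hSks m] at h1
        have h2 : ustar ∉ Sk m := by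
          intro hmem
          have := hD2 ustar m hmem
          omega
        rcases Finset.mem_union.mp h1 with h | h
        · exact absurd h h2
        · obtain ⟨_, s, _, hadj⟩ := Finset.mem_filter.mp h
          have := degree_pos_of_adj hadj
          have := hdf ustar hustar
          omega
    obtain ⟨x, hx⟩ := hXne
    set X' : α → Finset β := fun z => X z \ H.nbhd x with hX'
    have hM' := cover_reduce hM hustar hx
    have hdf' : ∀ z ∈ (G.shrink ustar).verts, (G.shrink ustar).degree z ≤ (X' z).card := by
      intro z hz
      obtain ⟨hzne, hzv⟩ := Finset.mem_erase.mp hz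
      have e1 := degree_shrink (w := ustar) hzne hzv
      have e2 := Finset.card_inter_add_card_sdiff (X z) (H.nbhd x)
      have e3 := nbhd_count hM hustar hzv hzne hx
      have e4 := hdf z hzv
      simp only [hX']
      omega
    have hslack' : ∀ z, z ∈ G.verts → z ≠ ustar → G.degree z < (X z).card →
        (G.shrink ustar).degree z < (X' z).card := by
      intro z hzv hzne hsl
      have e1 := degree_shrink (w := ustar) hzne hzv
      have e2 := Finset.card_inter_add_card_sdiff (X z) (H.nbhd x)
      have e3 := nbhd_count hM hustar hzv hzne hx
      simp only [hX']
      omega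
    have hP' : ∀ u ∈ (G.shrink ustar).verts, ∃ v₀ ∈ (G.shrink ustar).verts,
        (G.shrink ustar).degree v₀ < (X' v₀).card ∧
        Relation.ReflTransGen (G.shrink ustar).Adj u v₀ := by
      have CL : ∀ m, ∀ z, z ∈ G.verts → z ≠ ustar → z ∈ Sk m →
          ∃ v₀ ∈ (G.shrink ustar).verts, (G.shrink ustar).degree v₀ < (X' v₀).card ∧
          Relation.ReflTransGen (G.shrink ustar).Adj z v₀ := by
        intro m
        induction m with
        | zero =>
          intro z hzv hzne hzS
          rw [hSk0, hS] at hzS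
          exact ⟨z, Finset.mem_erase.mpr ⟨hzne, hzv⟩,
            hslack' z hzv hzne (Finset.mem_filter.mp hzS).2,
            Relation.ReflTransGen.refl⟩
        | succ m ih =>
          intro z hzv hzne hzS
          by_cases hzm : z ∈ Sk m
          · exact ih z hzv hzne hzm
          rw [hSks m] at hzS
          rcases Finset.mem_union.mp hzS with h | h
          · exact absurd h hzm
          obtain ⟨_, s, hs, hadj⟩ := Finset.mem_filter.mp h
          have hsv : s ∈ G.verts := hSkv m hs
          have hDz : m + 1 ≤ D z := by
            by_contra hlt
            push_neg at hlt
            exact hzm (hSkmono (by omega : D z ≤ m) (hD1 z hzv))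
          have hsne : s ≠ ustar := by
            intro heq
            have h1 := hD2 s m hs
            have h2 := hmax z hzv
            rw [heq] at h1
            omega
          obtain ⟨v₀, hv₀, hsl, hr⟩ := ih s hsv hsne hs
          exact ⟨v₀, hv₀, hsl, Relation.ReflTransGen.head (adj_shrink hzne hsne hadj) hr⟩
      intro u hu
      obtain ⟨hune, huv⟩ := Finset.mem_erase.mp hu
      exact CL (D u) u huv hune (hD1 u huv)
    have hcard' : (G.shrink ustar).verts.card ≤ n := by
      have : (G.shrink ustar).verts.card = G.verts.card - 1 := by
        exact Finset.card_erase_of_mem hustar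
      omega
    have hIT' := IH (G.shrink ustar) X' (reduceH G X H ustar x) hcard'
      (isCover_iff.mpr ⟨_, hM'⟩) hdf' hP'
    exact ext_reduce hM hustar hx hIT'

end DPaux
namespace DPaux

variable {α β : Type} [DecidableEq α] [DecidableEq β]
open HGraph

variable {G : HGraph α} {X : α → Finset β} {H : HGraph β} {M : ℕ → Finset ℕ}

theorem shrink_connected (hblock : ∀ w', ¬ IsSepVertex G w') {w : α} (hw : w ∈ G.verts) :
    ∀ a ∈ (G.shrink w).verts, ∀ b ∈ (G.shrink w).verts,
      Relation.ReflTransGen (G.shrink w).Adj a b := by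
  classical
  intro a ha b hb
  by_contra hnr
  set R := fun z => Relation.ReflTransGen (G.shrink w).Adj a z with hR
  set A' := (G.verts.erase w).filter R with hA'
  set B' := (G.verts.erase w).filter (fun z => ¬ R z) with hB'
  have haA : a ∈ A' := Finset.mem_filter.mpr ⟨ha, Relation.ReflTransGen.refl⟩
  have hbB : b ∈ B' := Finset.mem_filter.mpr ⟨hb, hnr⟩
  have key : ∀ f ∈ G.edges, ((G.inc f).erase w ⊆ A') ∨ ((G.inc f).erase w ⊆ B') := by
    intro f hf
    by_cases hall : ∀ z ∈ (G.inc f).erase w, R z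
    · left
      intro z hz
      have hzv : z ∈ G.verts.erase w := Finset.mem_erase.mpr
        ⟨(Finset.mem_erase.mp hz).1, G.inc_sub f hf (Finset.mem_of_mem_erase hz)⟩
      exact Finset.mem_filter.mpr ⟨hzv, hall z hz⟩
    · push_neg at hall
      obtain ⟨z₂, hz₂, hnR₂⟩ := hall
      right
      intro z hz
      have hzv : z ∈ G.verts.erase w := Finset.mem_erase.mpr
        ⟨(Finset.mem_erase.mp hz).1, G.inc_sub f hf (Finset.mem_of_mem_erase hz)⟩
      refine Finset.mem_filter.mpr ⟨hzv, ?_⟩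
      intro hRz
      by_cases hzz : z = z₂
      · exact hnR₂ (hzz ▸ hRz)
      have hcard : 2 ≤ ((G.inc f).erase w).card := by
        have hsub : ({z, z₂} : Finset α) ⊆ (G.inc f).erase w := by
          intro c hc
          rcases Finset.mem_insert.mp hc with rfl | hc
          · exact hz
          · rw [Finset.mem_singleton.mp hc]; exact hz₂
        have h2 : ({z, z₂} : Finset α).card = 2 := by
          rw [Finset.card_insert_of_notMem (by simpa using hzz), Finset.card_singleton]
        calc 2 = ({z, z₂} : Finset α).card := h2.symm
        _ ≤ _ := Finset.card_le_card hsub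
      have hadj : (G.shrink w).Adj z z₂ :=
        ⟨hzz, f, Finset.mem_filter.mpr ⟨hf, hcard⟩, hz, hz₂⟩
      exact hnR₂ (Relation.ReflTransGen.tail hRz hadj)
  apply hblock w
  refine ⟨insert w A', insert w B', ?_, ?_, ?_, ?_, ?_⟩
  · apply Finset.Subset.antisymm
    · apply Finset.union_subset
      · exact Finset.insert_subset hw ((Finset.filter_subset _ _).trans (Finset.erase_subset _ _))
      · exact Finset.insert_subset hw ((Finset.filter_subset _ _).trans (Finset.erase_subset _ _))
    · intro v hv
      by_cases hvw : v = w
      · exact Finset.mem_union_left _ (hvw ▸ Finset.mem_insert_self _ _)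
      by_cases hRv : R v
      · exact Finset.mem_union_left _ (Finset.mem_insert_of_mem
          (Finset.mem_filter.mpr ⟨Finset.mem_erase.mpr ⟨hvw, hv⟩, hRv⟩))
      · exact Finset.mem_union_right _ (Finset.mem_insert_of_mem
          (Finset.mem_filter.mpr ⟨Finset.mem_erase.mpr ⟨hvw, hv⟩, hRv⟩))
  · ext v
    simp only [Finset.mem_inter, Finset.mem_insert, Finset.mem_singleton]
    constructor
    · rintro ⟨h1 | h1, h2 | h2⟩
      · exact h1
      · exact h1
      · exact h2
      · exact absurd (Finset.mem_filter.mp h1).2 (Finset.mem_filter.mp h2).2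
    · rintro rfl
      exact ⟨Or.inl rfl, Or.inl rfl⟩
  · have hwA : w ∉ A' := fun h => (Finset.mem_erase.mp (Finset.mem_of_mem_filter _ h)).1 rfl
    rw [Finset.card_insert_of_notMem hwA]
    have := Finset.card_pos.mpr ⟨a, haA⟩
    omega
  · have hwB : w ∉ B' := fun h => (Finset.mem_erase.mp (Finset.mem_of_mem_filter _ h)).1 rfl
    rw [Finset.card_insert_of_notMem hwB]
    have := Finset.card_pos.mpr ⟨b, hbB⟩
    omega
  · intro f hf
    rcases key f hf with h | h
    · left
      intro z hz
      by_cases hzw : z = w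
      · exact hzw ▸ Finset.mem_insert_self _ _
      · exact Finset.mem_insert_of_mem (h (Finset.mem_erase.mpr ⟨hzw, hz⟩))
    · right
      intro z hz
      by_cases hzw : z = w
      · exact hzw ▸ Finset.mem_insert_self _ _
      · exact Finset.mem_insert_of_mem (h (Finset.mem_erase.mpr ⟨hzw, hz⟩))

/-- Under the hypotheses of the main theorem, for every vertex u, colour y ∈ X u and
vertex z ≠ u, the number of H-neighbours of y inside X z is exactly the multiplicity. -/
theorem count_eq (hM : CoverM G X H M)
    (hdf : ∀ v ∈ G.verts, G.degree v ≤ (X v).card)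
    (hunc : ¬ HasIT H G.verts X)
    (hblock : ∀ w, ¬ IsSepVertex G w)
    {u : α} (hu : u ∈ G.verts) {y : β} (hy : y ∈ X u)
    {z : α} (hz : z ∈ G.verts) (hzu : z ≠ u) :
    (X z ∩ H.nbhd y).card = G.mult z u := by
  have hle := nbhd_count hM hu hz hzu hy
  rcases Nat.lt_or_ge (X z ∩ H.nbhd y).card (G.mult z u) with hlt | hge
  · exfalso
    set X' : α → Finset β := fun v => X v \ H.nbhd y with hX'
    have hM' := cover_reduce hM hu hy
    have hdf' : ∀ v ∈ (G.shrink u).verts, (G.shrink u).degree v ≤ (X' v).card := by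
      intro v hv
      obtain ⟨hvne, hvv⟩ := Finset.mem_erase.mp hv
      have e1 := degree_shrink (w := u) hvne hvv
      have e2 := Finset.card_inter_add_card_sdiff (X v) (H.nbhd y)
      have e3 := nbhd_count hM hu hvv hvne hy
      have e4 := hdf v hvv
      simp only [hX']
      omega
    have hslack : (G.shrink u).degree z < (X' z).card := by
      have e1 := degree_shrink (w := u) hzu hz
      have e2 := Finset.card_inter_add_card_sdiff (X z) (H.nbhd y)
      have e4 := hdf z hz
      simp only [hX']
      omega
    have hzmem : z ∈ (G.shrink u).verts := Finset.mem_erase.mpr ⟨hzu, hz⟩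
    have hP : ∀ a ∈ (G.shrink u).verts, ∃ v₀ ∈ (G.shrink u).verts,
        (G.shrink u).degree v₀ < (X' v₀).card ∧
        Relation.ReflTransGen (G.shrink u).Adj a v₀ :=
      fun a ha => ⟨z, hzmem, hslack, shrink_connected hblock hu a ha z hzmem⟩
    have hIT := colorable_of_slack (G.shrink u).verts.card (G.shrink u) X'
      (reduceH G X H u y) le_rfl (isCover_iff.mpr ⟨_, hM'⟩) hdf' hP
    exact hunc (ext_reduce hM hu hy hIT)
  · omega

end DPaux
namespace DPaux

variable {α β : Type} [DecidableEq α] [DecidableEq β]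
open HGraph

variable {G : HGraph α} {X : α → Finset β} {H : HGraph β} {M : ℕ → Finset ℕ}

theorem cover_eraseEdge (hM : CoverM G X H M) {f : ℕ} (hMf : M f = ∅) :
    CoverM (G.eraseEdge f) X H M := by
  have hsub : (G.eraseEdge f).edges ⊆ G.edges := Finset.erase_subset _ _
  constructor
  · exact hM.dis
  · exact hM.hverts
  · exact hM.hindep
  · exact fun e he => hM.msub e (hsub he)
  · exact fun e he => hM.mone e (hsub he)
  · exact fun e he => hM.mcov e (hsub he)
  · exact fun e he => hM.mdisj e (hsub he)
  · rw [hM.hedges]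
    apply Finset.Subset.antisymm
    · intro e he
      obtain ⟨g, hg, heg⟩ := Finset.mem_biUnion.mp he
      have hgf : g ≠ f := by
        rintro rfl
        rw [hMf] at heg
        simp at heg
      exact Finset.mem_biUnion.mpr ⟨g, Finset.mem_erase.mpr ⟨hgf, hg⟩, heg⟩
    · intro e he
      obtain ⟨g, hg, heg⟩ := Finset.mem_biUnion.mp he
      exact Finset.mem_biUnion.mpr ⟨g, Finset.mem_of_mem_erase hg, heg⟩

theorem degree_eraseEdge_le {f : ℕ} {z : α} : (G.eraseEdge f).degree z ≤ G.degree z :=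
  Finset.card_le_card (Finset.filter_subset_filter _ (Finset.erase_subset _ _))

theorem degree_eraseEdge {f : ℕ} {z : α} (hf : f ∈ G.edges) (hz : z ∈ G.inc f) :
    (G.eraseEdge f).degree z + 1 = G.degree z := by
  unfold HGraph.degree
  show ((G.edges.erase f).filter (fun e => z ∈ G.inc e)).card + 1 = _
  rw [Finset.filter_erase]
  rw [Finset.card_erase_of_mem (Finset.mem_filter.mpr ⟨hf, hz⟩)]
  have : f ∈ G.edges.filter (fun e => z ∈ G.inc e) := Finset.mem_filter.mpr ⟨hf, hz⟩
  have := Finset.card_pos.mpr ⟨f, this⟩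
  omega

theorem reach_eraseEdge (hconn : ∀ a ∈ G.verts, ∀ b ∈ G.verts,
    Relation.ReflTransGen G.Adj a b) {f : ℕ} (hf : f ∈ G.edges)
    {z₀ : α} (hz₀ : z₀ ∈ G.inc f) {a : α} (ha : a ∈ G.verts) :
    ∃ zf ∈ G.inc f, Relation.ReflTransGen (G.eraseEdge f).Adj a zf := by
  have hz₀v : z₀ ∈ G.verts := G.inc_sub f hf hz₀
  have h := hconn a ha z₀ hz₀v
  clear ha
  induction h using Relation.ReflTransGen.head_induction_on with
  | refl => exact ⟨z₀, hz₀, Relation.ReflTransGen.refl⟩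
  | head hadj _ ih =>
    rename_i b c _
    obtain ⟨hbc, g, hg, hbg, hcg⟩ := hadj
    by_cases hgf : g = f
    · exact ⟨b, hgf ▸ hbg, Relation.ReflTransGen.refl⟩
    · obtain ⟨zf, hzf, hr⟩ := ih
      exact ⟨zf, hzf, Relation.ReflTransGen.head
        ⟨hbc, g, Finset.mem_erase.mpr ⟨hgf, hg⟩, hbg, hcg⟩ hr⟩

/-- every matching on a hyperedge saturates every list -/
theorem hyperedge_saturate (hM : CoverM G X H M)
    (hdf : ∀ v ∈ G.verts, G.degree v ≤ (X v).card)
    (hunc : ¬ HasIT H G.verts X)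
    (hblock : ∀ w, ¬ IsSepVertex G w)
    {f : ℕ} (hf : f ∈ G.edges) (h3 : 3 ≤ (G.inc f).card)
    {w : α} (hw : w ∈ G.inc f) {x : β} (hx : x ∈ X w) :
    ∃ e ∈ M f, x ∈ H.inc e := by
  classical
  by_contra hmiss
  push_neg at hmiss
  have hwv : w ∈ G.verts := G.inc_sub f hf hw
  set X' : α → Finset β := fun z => X z \ H.nbhd x with hX'
  set H' := reduceH G X H w x with hH'
  have hM' := cover_reduce hM hwv hx
  have hfG' : f ∈ (G.shrink w).edges := by
    refine Finset.mem_filter.mpr ⟨hf, ?_⟩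
    have := Finset.card_erase_add_one hw
    omega
  have hMf' : M f ∩ H'.edges = ∅ := by
    rw [Finset.eq_empty_iff_forall_notMem]
    intro e he
    obtain ⟨heM, heH'⟩ := Finset.mem_inter.mp he
    obtain ⟨heH, hc2, hrv⟩ := Finset.mem_filter.mp heH'
    have hxe : x ∉ H.inc e := hmiss e heM
    obtain ⟨pt, hpt⟩ := Finset.card_eq_one.mp (hM.mone f hf e heM w hw)
    have hptm : pt ∈ H.inc e ∧ pt ∈ X w := by
      have : pt ∈ H.inc e ∩ X w := by rw [hpt]; simp
      exact Finset.mem_inter.mp this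
    have hptx : pt ≠ x := fun h => hxe (h ▸ hptm.1)
    have : pt ∈ (H.inc e).erase x := Finset.mem_erase.mpr ⟨hptx, hptm.1⟩
    exact (rv_X hM (hrv this) hptm.2 hwv).1 rfl
  -- cover of the edge-deleted shrink
  have hMe : CoverM ((G.shrink w).eraseEdge f) X' H'
      (fun g => M g ∩ H'.edges) := cover_eraseEdge hM' hMf'
  have hdf' : ∀ v ∈ (G.shrink w).verts, (G.shrink w).degree v ≤ (X' v).card := by
    intro v hv
    obtain ⟨hvne, hvv⟩ := Finset.mem_erase.mp hv
    have e1 := degree_shrink (w := w) hvne hvv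
    have e2 := Finset.card_inter_add_card_sdiff (X v) (H.nbhd x)
    have e3 := nbhd_count hM hwv hvv hvne hx
    have e4 := hdf v hvv
    simp only [hX']
    omega
  have hdf'' : ∀ v ∈ ((G.shrink w).eraseEdge f).verts,
      ((G.shrink w).eraseEdge f).degree v ≤ (X' v).card :=
    fun v hv => degree_eraseEdge_le.trans (hdf' v hv)
  have hslack : ∀ z ∈ (G.shrink w).inc f,
      ((G.shrink w).eraseEdge f).degree z < (X' z).card := by
    intro z hz
    have e1 := degree_eraseEdge (G := G.shrink w) hfG' hz
    have hzv : z ∈ (G.shrink w).verts := (G.shrink w).inc_sub f hfG' hz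
    have := hdf' z hzv
    omega
  have hpos : 0 < ((G.shrink w).inc f).card :=
    lt_of_lt_of_le (by norm_num) ((G.shrink w).inc_card f hfG')
  obtain ⟨z₀, hz₀⟩ := Finset.card_pos.mp hpos
  have hP : ∀ a ∈ ((G.shrink w).eraseEdge f).verts,
      ∃ v₀ ∈ ((G.shrink w).eraseEdge f).verts,
      ((G.shrink w).eraseEdge f).degree v₀ < (X' v₀).card ∧
      Relation.ReflTransGen ((G.shrink w).eraseEdge f).Adj a v₀ := by
    intro a ha
    obtain ⟨zf, hzf, hr⟩ := reach_eraseEdge (shrink_connected hblock hwv) hfG' hz₀ ha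
    exact ⟨zf, (G.shrink w).inc_sub f hfG' hzf, hslack zf hzf, hr⟩
  have hIT := colorable_of_slack ((G.shrink w).eraseEdge f).verts.card _ X' H' le_rfl
    (isCover_iff.mpr ⟨_, hMe⟩) hdf'' hP
  exact hunc (ext_reduce hM hwv hx hIT)

/-- saturation gives equal list sizes along an edge -/
theorem card_eq_of_saturate (hM : CoverM G X H M) {f : ℕ} (hf : f ∈ G.edges)
    (hsat : ∀ w ∈ G.inc f, ∀ x ∈ X w, ∃ e ∈ M f, x ∈ H.inc e)
    {w : α} (hw : w ∈ G.inc f) : (X w).card = (M f).card := by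
  classical
  have hwv : w ∈ G.verts := G.inc_sub f hf hw
  rcases Nat.lt_trichotomy (X w).card (M f).card with h | h | h
  · exfalso
    have hMne : (M f).Nonempty := Finset.card_pos.mp (by omega)
    obtain ⟨e0, he0⟩ := hMne
    obtain ⟨y0', hy0'⟩ := Finset.card_eq_one.mp (hM.mone f hf e0 he0 w hw)
    have hy0 : y0' ∈ X w := by
      have : y0' ∈ H.inc e0 ∩ X w := by rw [hy0']; simp
      exact (Finset.mem_inter.mp this).2
    set φ : ℕ → β := fun e =>
      if he : ∃ pt, pt ∈ H.inc e ∩ X w then he.choose else y0' with hφ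
    have hmaps : ∀ e ∈ M f, φ e ∈ X w := by
      intro e he
      obtain ⟨pt, hpt⟩ := Finset.card_eq_one.mp (hM.mone f hf e he w hw)
      have hex : ∃ pt, pt ∈ H.inc e ∩ X w := ⟨pt, by rw [hpt]; simp⟩
      rw [hφ]; simp only [dif_pos hex]
      exact (Finset.mem_inter.mp hex.choose_spec).2
    obtain ⟨e₁, he₁, e₂, he₂, hne, heq⟩ :=
      Finset.exists_ne_map_eq_of_card_lt_of_maps_to h hmaps
    obtain ⟨p₁, hp₁⟩ := Finset.card_eq_one.mp (hM.mone f hf e₁ he₁ w hw)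
    obtain ⟨p₂, hp₂⟩ := Finset.card_eq_one.mp (hM.mone f hf e₂ he₂ w hw)
    have hex₁ : ∃ pt, pt ∈ H.inc e₁ ∩ X w := ⟨p₁, by rw [hp₁]; simp⟩
    have hex₂ : ∃ pt, pt ∈ H.inc e₂ ∩ X w := ⟨p₂, by rw [hp₂]; simp⟩
    rw [hφ] at heq
    simp only [dif_pos hex₁, dif_pos hex₂] at heq
    have h1 := hex₁.choose_spec
    have h2 := hex₂.choose_spec
    rw [heq] at h1
    exact (Finset.disjoint_left.mp (hM.mdisj f hf e₁ he₁ e₂ he₂ hne)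
      (Finset.mem_inter.mp h1).1) (Finset.mem_inter.mp h2).1
  · exact h
  · exfalso
    set φ : β → ℕ := fun y =>
      if hy : ∃ e, e ∈ M f ∧ y ∈ H.inc e then hy.choose else 0 with hφ
    have hmaps : ∀ y ∈ X w, φ y ∈ M f := by
      intro y hy
      obtain ⟨e, he, hye⟩ := hsat w hw y hy
      have hex : ∃ e, e ∈ M f ∧ y ∈ H.inc e := ⟨e, he, hye⟩
      rw [hφ]; simp only [dif_pos hex]
      exact hex.choose_spec.1
    obtain ⟨y₁, hy₁, y₂, hy₂, hne, heq⟩ :=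
      Finset.exists_ne_map_eq_of_card_lt_of_maps_to h hmaps
    obtain ⟨e₁, he₁, hm₁⟩ := hsat w hw y₁ hy₁
    obtain ⟨e₂, he₂, hm₂⟩ := hsat w hw y₂ hy₂
    have hex₁ : ∃ e, e ∈ M f ∧ y₁ ∈ H.inc e := ⟨e₁, he₁, hm₁⟩
    have hex₂ : ∃ e, e ∈ M f ∧ y₂ ∈ H.inc e := ⟨e₂, he₂, hm₂⟩
    rw [hφ] at heq
    simp only [dif_pos hex₁, dif_pos hex₂] at heq
    have h1 := hex₁.choose_spec
    have h2 := hex₂.choose_spec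
    rw [heq] at h1
    obtain ⟨pt, hpt⟩ := Finset.card_eq_one.mp
      (hM.mone f hf _ h1.1 w hw)
    have hyy₁ : y₁ ∈ H.inc hex₂.choose ∩ X w := Finset.mem_inter.mpr ⟨h1.2, hy₁⟩
    have hyy₂ : y₂ ∈ H.inc hex₂.choose ∩ X w := Finset.mem_inter.mpr ⟨h2.2, hy₂⟩
    rw [hpt] at hyy₁ hyy₂
    exact hne ((Finset.mem_singleton.mp hyy₁).trans (Finset.mem_singleton.mp hyy₂).symm)

end DPaux
namespace DPaux

variable {α β : Type} [DecidableEq α] [DecidableEq β]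
open HGraph

variable {G : HGraph α} {X : α → Finset β} {H : HGraph β} {M : ℕ → Finset ℕ}

theorem mult_comm' {u v : α} : G.mult u v = G.mult v u := by
  unfold HGraph.mult
  rw [Finset.pair_comm]

theorem tight (hG : G.Connected) (hM : CoverM G X H M)
    (hdf : ∀ v ∈ G.verts, G.degree v ≤ (X v).card)
    (hunc : ¬ HasIT H G.verts X) :
    ∀ v ∈ G.verts, (X v).card = G.degree v := by
  intro v hv
  rcases eq_or_lt_of_le (hdf v hv) with h | h
  · exact h.symm
  · exfalso
    apply hunc
    exact colorable_of_slack G.verts.card G X H le_rfl (isCover_iff.mpr ⟨M, hM⟩) hdf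
      (fun u hu => ⟨v, hv, h, hG u hu v hv⟩)

theorem Xcard_eq_of_adj (hG : G.Connected) (hM : CoverM G X H M)
    (hdf : ∀ v ∈ G.verts, G.degree v ≤ (X v).card)
    (hunc : ¬ HasIT H G.verts X)
    (hblock : ∀ w, ¬ IsSepVertex G w)
    {u v : α} (h : G.Adj u v) : (X u).card = (X v).card := by
  classical
  obtain ⟨huv, f, hf, huf, hvf⟩ := h
  have hu : u ∈ G.verts := G.inc_sub f hf huf
  have hv : v ∈ G.verts := G.inc_sub f hf hvf
  by_cases h3 : 3 ≤ (G.inc f).card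
  · have hsat : ∀ z ∈ G.inc f, ∀ x ∈ X z, ∃ e ∈ M f, x ∈ H.inc e :=
      fun z hz x hx => hyperedge_saturate hM hdf hunc hblock hf h3 hz hx
    exact (card_eq_of_saturate hM hf hsat huf).trans
      (card_eq_of_saturate hM hf hsat hvf).symm
  · have h2 := G.inc_card f hf
    have hsub : ({u, v} : Finset α) ⊆ G.inc f := by
      intro c hc
      rcases Finset.mem_insert.mp hc with rfl | hc
      · exact huf
      · rw [Finset.mem_singleton.mp hc]; exact hvf
    have hc2 : ({u, v} : Finset α).card = 2 := by
      rw [Finset.card_insert_of_notMem (by simpa using huv), Finset.card_singleton]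
    have hincf : G.inc f = {u, v} :=
      (Finset.eq_of_subset_of_card_le hsub (by omega)).symm
    have hpos : 0 < G.mult u v :=
      Finset.card_pos.mpr ⟨f, Finset.mem_filter.mpr ⟨hf, hincf⟩⟩
    have key1 : ∀ x ∈ X u, (X v ∩ H.nbhd x).card = G.mult v u :=
      fun x hx => count_eq hM hdf hunc hblock hu hx hv (Ne.symm huv)
    have key2 : ∀ y ∈ X v, (X u ∩ H.nbhd y).card = G.mult u v :=
      fun y hy => count_eq hM hdf hunc hblock hv hy hu huv
    have hrep : ∀ (a b : α), a ∈ G.verts → b ∈ G.verts → ∀ x : β,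
        X b ∩ H.nbhd x = (X b).filter (fun z => ∃ e ∈ H.edges, H.inc e = {x, z}) := by
      intro a b ha hb x
      ext z
      simp only [Finset.mem_inter, Finset.mem_filter, HGraph.nbhd]
      constructor
      · rintro ⟨h1, _, h2⟩
        exact ⟨h1, h2⟩
      · rintro ⟨h1, h2⟩
        refine ⟨h1, ?_, h2⟩
        rw [hM.hverts]
        exact Finset.mem_biUnion.mpr ⟨b, hb, h1⟩
    have hsum1 : ∑ x ∈ X u, (X v ∩ H.nbhd x).card = (X u).card * G.mult v u := by
      rw [Finset.sum_congr rfl key1, Finset.sum_const, smul_eq_mul]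
    have hsum2 : ∑ y ∈ X v, (X u ∩ H.nbhd y).card = (X v).card * G.mult u v := by
      rw [Finset.sum_congr rfl key2, Finset.sum_const, smul_eq_mul]
    have hswap : ∑ x ∈ X u, (X v ∩ H.nbhd x).card
        = ∑ y ∈ X v, (X u ∩ H.nbhd y).card := by
      have e1 : ∑ x ∈ X u, (X v ∩ H.nbhd x).card
          = ∑ x ∈ X u, ∑ z ∈ X v, (if ∃ e ∈ H.edges, H.inc e = {x, z} then 1 else 0) := by
        refine Finset.sum_congr rfl fun x hx => ?_
        rw [hrep u v hu hv x, Finset.card_filter]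
      have e2 : ∑ y ∈ X v, (X u ∩ H.nbhd y).card
          = ∑ y ∈ X v, ∑ z ∈ X u, (if ∃ e ∈ H.edges, H.inc e = {y, z} then 1 else 0) := by
        refine Finset.sum_congr rfl fun y hy => ?_
        rw [hrep v u hv hu y, Finset.card_filter]
      rw [e1, e2, Finset.sum_comm]
      refine Finset.sum_congr rfl fun z hz => Finset.sum_congr rfl fun x hx => ?_
      refine if_congr ?_ rfl rfl
      constructor
      · rintro ⟨e, he, h⟩
        exact ⟨e, he, by rw [h, Finset.pair_comm]⟩
      · rintro ⟨e, he, h⟩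
        exact ⟨e, he, by rw [h, Finset.pair_comm]⟩
    have hmc : G.mult v u = G.mult u v := mult_comm'
    have : (X u).card * G.mult u v = (X v).card * G.mult u v := by
      rw [← hsum2, ← hswap, hsum1, hmc]
    exact Nat.eq_of_mul_eq_mul_right hpos this

theorem deg_const (hG : G.Connected) (hM : CoverM G X H M)
    (hdf : ∀ v ∈ G.verts, G.degree v ≤ (X v).card)
    (hunc : ¬ HasIT H G.verts X)
    (hblock : ∀ w, ¬ IsSepVertex G w) :
    ∀ u ∈ G.verts, ∀ v ∈ G.verts, G.degree u = G.degree v := by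
  have hX : ∀ u v : α, Relation.ReflTransGen G.Adj u v → (X u).card = (X v).card := by
    intro u v h
    induction h with
    | refl => rfl
    | tail _ hadj ih => exact ih.trans (Xcard_eq_of_adj hG hM hdf hunc hblock hadj)
  intro u hu v hv
  rw [← tight hG hM hdf hunc u hu, ← tight hG hM hdf hunc v hv]
  exact hX u v (hG u hu v hv)

theorem edge_to_mult (hM : CoverM G X H M) {u v : α} (hu : u ∈ G.verts)
    (hv : v ∈ G.verts) (huv : u ≠ v) {e : ℕ} (heH : e ∈ H.edges)
    (hsub : H.inc e ⊆ X u ∪ X v) :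
    ∃ f, (f ∈ G.edges ∧ G.inc f = {u, v}) ∧ e ∈ M f := by
  obtain ⟨f, hf, hef⟩ := hM.exists_edge heH
  have hfsub : G.inc f ⊆ {u, v} := by
    intro z hz
    obtain ⟨pt, hpt⟩ := Finset.card_eq_one.mp (hM.mone f hf e hef z hz)
    have hptm : pt ∈ H.inc e ∧ pt ∈ X z := by
      have : pt ∈ H.inc e ∩ X z := by rw [hpt]; simp
      exact Finset.mem_inter.mp this
    have hzv : z ∈ G.verts := G.inc_sub f hf hz
    rcases Finset.mem_union.mp (hsub hptm.1) with h | h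
    · have : z = u := by
        by_contra hne
        exact (Finset.disjoint_left.mp (hM.dis z hzv u hu hne) hptm.2) h
      exact this ▸ Finset.mem_insert_self _ _
    · have : z = v := by
        by_contra hne
        exact (Finset.disjoint_left.mp (hM.dis z hzv v hv hne) hptm.2) h
      rw [this]
      exact Finset.mem_insert_of_mem (Finset.mem_singleton_self _)
  have hc2 : ({u, v} : Finset α).card = 2 := by
    rw [Finset.card_insert_of_notMem (by simpa using huv), Finset.card_singleton]
  have h2 := G.inc_card f hf
  exact ⟨f, ⟨hf, Finset.eq_of_subset_of_card_le hfsub (by omega)⟩, hef⟩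

theorem induce_edge_prop (hM : CoverM G X H M) {u v : α} (hu : u ∈ G.verts)
    (hv : v ∈ G.verts) (huv : u ≠ v) {e : ℕ}
    (he : e ∈ (H.induce (X u ∪ X v)).edges) :
    (H.inc e).card = 2 ∧ (H.inc e ∩ X u).card = 1 ∧ (H.inc e ∩ X v).card = 1 := by
  obtain ⟨heH, hsub⟩ := Finset.mem_filter.mp he
  obtain ⟨f, ⟨hf, hincf⟩, hef⟩ := edge_to_mult hM hu hv huv heH hsub
  have hc2 : ({u, v} : Finset α).card = 2 := by
    rw [Finset.card_insert_of_notMem (by simpa using huv), Finset.card_singleton]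
  refine ⟨?_, ?_, ?_⟩
  · rw [hM.card_inc hf hef, hincf, hc2]
  · exact hM.mone f hf e hef u (by rw [hincf]; simp)
  · exact hM.mone f hf e hef v (by rw [hincf]; simp)

theorem induce_degree_left (hM : CoverM G X H M)
    (hdf : ∀ v ∈ G.verts, G.degree v ≤ (X v).card)
    (hunc : ¬ HasIT H G.verts X)
    (hblock : ∀ w, ¬ IsSepVertex G w)
    {u v : α} (hu : u ∈ G.verts) (hv : v ∈ G.verts) (huv : u ≠ v)
    {y : β} (hy : y ∈ X u) :
    (H.induce (X u ∪ X v)).degree y = G.mult u v := by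
  classical
  set S := X u ∪ X v with hS
  have hdeg : (H.induce S).degree y
      = (H.edges.filter (fun e => H.inc e ⊆ S ∧ y ∈ H.inc e)).card := by
    unfold HGraph.degree
    show ((H.edges.filter (fun e => H.inc e ⊆ S)).filter (fun e => y ∈ H.inc e)).card = _
    rw [Finset.filter_filter]
  set Ey := H.edges.filter (fun e => H.inc e ⊆ S ∧ y ∈ H.inc e) with hEy
  have hupper : Ey.card ≤ G.mult u v := by
    by_contra hlt
    push_neg at hlt
    have hex : ∀ e ∈ Ey, ∃ f, f ∈ G.edges.filter (fun f => G.inc f = {u, v}) ∧ e ∈ M f := by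
      intro e he
      obtain ⟨heH, hs, _⟩ := Finset.mem_filter.mp he
      obtain ⟨f, ⟨hf, hincf⟩, hef⟩ := edge_to_mult hM hu hv huv heH hs
      exact ⟨f, Finset.mem_filter.mpr ⟨hf, hincf⟩, hef⟩
    set φ : ℕ → ℕ := fun e =>
      if h : ∃ f, f ∈ G.edges.filter (fun f => G.inc f = {u, v}) ∧ e ∈ M f
      then h.choose else 0 with hφ
    have hmaps : ∀ e ∈ Ey, φ e ∈ G.edges.filter (fun f => G.inc f = {u, v}) := by
      intro e he
      have h := hex e he
      rw [hφ]; simp only [dif_pos h]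
      exact h.choose_spec.1
    obtain ⟨e₁, he₁, e₂, he₂, hne, heq⟩ :=
      Finset.exists_ne_map_eq_of_card_lt_of_maps_to hlt hmaps
    have h1 := hex e₁ he₁
    have h2 := hex e₂ he₂
    rw [hφ] at heq
    simp only [dif_pos h1, dif_pos h2] at heq
    have hm1 := h1.choose_spec.2
    have hm2 := h2.choose_spec.2
    rw [heq] at hm1
    have hfG : h2.choose ∈ G.edges := (Finset.mem_filter.mp h2.choose_spec.1).1
    have hy1 : y ∈ H.inc e₁ := (Finset.mem_filter.mp he₁).2.2
    have hy2 : y ∈ H.inc e₂ := (Finset.mem_filter.mp he₂).2.2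
    exact (Finset.disjoint_left.mp (hM.mdisj _ hfG e₁ hm1 e₂ hm2 hne) hy1) hy2
  have hlower : G.mult u v ≤ Ey.card := by
    have hcnt := count_eq hM hdf hunc hblock hu hy hv (Ne.symm huv)
    rw [← mult_comm' (u := v) (v := u), ← hcnt]
    by_contra hlt
    push_neg at hlt
    have hex : ∀ z ∈ X v ∩ H.nbhd y, ∃ e, e ∈ H.edges ∧ H.inc e = {y, z} := by
      intro z hz
      obtain ⟨hz1, hz2⟩ := Finset.mem_inter.mp hz
      obtain ⟨_, e, he, hinc⟩ := Finset.mem_filter.mp hz2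
      exact ⟨e, he, hinc⟩
    set φ : β → ℕ := fun z =>
      if h : ∃ e, e ∈ H.edges ∧ H.inc e = {y, z} then h.choose else 0 with hφ
    have hmaps : ∀ z ∈ X v ∩ H.nbhd y, φ z ∈ Ey := by
      intro z hz
      have h := hex z hz
      rw [hφ]; simp only [dif_pos h]
      obtain ⟨heH, hinc⟩ := h.choose_spec
      refine Finset.mem_filter.mpr ⟨heH, ?_, ?_⟩
      · rw [hinc, hS]
        intro c hc
        rcases Finset.mem_insert.mp hc with rfl | hc
        · exact Finset.mem_union_left _ hy
        · rw [Finset.mem_singleton.mp hc]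
          exact Finset.mem_union_right _ (Finset.mem_inter.mp hz).1
      · rw [hinc]; simp
    obtain ⟨z₁, hz₁, z₂, hz₂, hne, heq⟩ :=
      Finset.exists_ne_map_eq_of_card_lt_of_maps_to hlt hmaps
    have h1 := hex z₁ hz₁
    have h2 := hex z₂ hz₂
    rw [hφ] at heq
    simp only [dif_pos h1, dif_pos h2] at heq
    have hi1 := h1.choose_spec.2
    have hi2 := h2.choose_spec.2
    rw [heq, hi2] at hi1
    have hz1v : z₁ ∈ X v := (Finset.mem_inter.mp hz₁).1
    have hz1y : z₁ ≠ y := ne_of_X hM hv hu (Ne.symm huv) hz1v hy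
    have : z₁ ∈ ({y, z₂} : Finset β) := by rw [hi1]; simp
    rcases Finset.mem_insert.mp this with h | h
    · exact hz1y h
    · exact hne (Finset.mem_singleton.mp h)
  rw [hdeg]
  omega

end DPaux
/-- if an uncolorable degree-feasible configuration has no separating
vertex, then G is regular and each H[X_u ∪ X_v] is a μ_G(u,v)-regular bipartite
graph with parts X_u and X_v. -/
theorem uncolorable_block_regular (G : HGraph α) (X : α → Finset β) (H : HGraph β)
    (hG : G.Connected) (hC : IsCover G X H)
    (hdf : ∀ v ∈ G.verts, G.degree v ≤ (X v).card)
    (hunc : ¬ HasIT H G.verts X)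
    (hblock : ∀ w, ¬ IsSepVertex G w) :
    (∀ u ∈ G.verts, ∀ v ∈ G.verts, G.degree u = G.degree v) ∧
    ∀ u ∈ G.verts, ∀ v ∈ G.verts, u ≠ v →
      (∀ e ∈ (H.induce (X u ∪ X v)).edges,
        (H.inc e).card = 2 ∧ (H.inc e ∩ X u).card = 1 ∧ (H.inc e ∩ X v).card = 1) ∧
      (∀ y ∈ X u ∪ X v, (H.induce (X u ∪ X v)).degree y = G.mult u v) := by
  obtain ⟨M, hM⟩ := DPaux.isCover_iff.mp hC
  refine ⟨DPaux.deg_const hG hM hdf hunc hblock, ?_⟩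
  intro u hu v hv huv
  refine ⟨fun e he => DPaux.induce_edge_prop hM hu hv huv he, ?_⟩
  intro y hy
  rcases Finset.mem_union.mp hy with h | h
  · exact DPaux.induce_degree_left hM hdf hunc hblock hu hv huv h
  · have h2 := DPaux.induce_degree_left hM hdf hunc hblock hv hu (Ne.symm huv) h
    rw [Finset.union_comm (X u) (X v), DPaux.mult_comm' (u := u) (v := v)]
    exact h2
end
end
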